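/- arXiv:0807.2871 — 5 statements merged into one kernel-verified Lean document; each statement's English description precedes it below -/
import Mathlib

section
/- Let α, β ∈ ℚ ∩ (0,1) with α = 2^t·m/n and β = 2^k·u/n where m, n, u are odd, gcd(m,n) = gcd(u,n) = 1, and t, k ∈ ℤ. Then there exists an orientation-preserving piecewise-linear homeomorphism g of [0,1] with finitely many breakpoints, all breakpoints dyadic rational and all slopes integer powers of 2, such that g(α) = β, if and only if u ≡ 2^R·m (mod n) for some R ∈ ℤ. -/
/-- A real number is a dyadic rational. -/
def IsDyadic (x : ℝ) : Prop := ∃ (a : ℤ) (b : ℕ), x = (a : ℝ) / 2 ^ b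

/-- `f` is an element of Thompson's group `F = PL₂(I)`: an orientation-preserving
piecewise-linear homeomorphism of `[0,1]` with finitely many breakpoints, all
breakpoints dyadic rational and all slopes integer powers of `2`. -/
def PL2Fun (f : ℝ → ℝ) : Prop :=
  f 0 = 0 ∧ f 1 = 1 ∧ StrictMonoOn f (Set.Icc 0 1) ∧
  ∃ (n : ℕ) (x : Fin (n + 1) → ℝ), StrictMono x ∧ x 0 = 0 ∧ x (Fin.last n) = 1 ∧
    (∀ i, IsDyadic (x i)) ∧
    ∀ i : Fin n, ∃ (k : ℤ) (c : ℝ),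
      ∀ t ∈ Set.Icc (x i.castSucc) (x i.succ), f t = (2 : ℝ) ^ k * t + c

namespace PL2Aux

lemma dyadic_def {a : ℤ} {b : ℕ} : IsDyadic ((a : ℝ) / 2 ^ b) := ⟨a, b, rfl⟩

lemma dyadic_add {x y : ℝ} (hx : IsDyadic x) (hy : IsDyadic y) : IsDyadic (x + y) := by
  obtain ⟨a, b, rfl⟩ := hx; obtain ⟨c, d, rfl⟩ := hy
  refine ⟨a * 2 ^ d + c * 2 ^ b, b + d, ?_⟩
  have h1 : (2:ℝ) ^ b ≠ 0 := by positivity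
  have h2 : (2:ℝ) ^ d ≠ 0 := by positivity
  push_cast
  rw [div_add_div _ _ h1 h2, div_eq_div_iff (by positivity) (by positivity)]
  ring

lemma dyadic_zero : IsDyadic 0 := ⟨0, 0, by norm_num⟩
lemma dyadic_one : IsDyadic 1 := ⟨1, 0, by norm_num⟩

lemma dyadic_neg {x : ℝ} (hx : IsDyadic x) : IsDyadic (-x) := by
  obtain ⟨a, b, rfl⟩ := hx; exact ⟨-a, b, by push_cast; ring⟩

lemma dyadic_sub {x y : ℝ} (hx : IsDyadic x) (hy : IsDyadic y) : IsDyadic (x - y) := by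
  rw [sub_eq_add_neg]; exact dyadic_add hx (dyadic_neg hy)

lemma dyadic_zpow_mul (z : ℤ) {x : ℝ} (hx : IsDyadic x) : IsDyadic ((2:ℝ) ^ z * x) := by
  obtain ⟨a, b, rfl⟩ := hx
  rcases le_or_gt 0 z with h | h
  · refine ⟨a * 2 ^ z.toNat, b, ?_⟩
    have : (2:ℝ) ^ z = (2:ℝ) ^ z.toNat := by
      rw [← zpow_natCast]; congr 1; omega
    rw [this]; push_cast; ring
  · refine ⟨a, b + (-z).toNat, ?_⟩
    have : (2:ℝ) ^ z = ((2:ℝ) ^ (-z).toNat)⁻¹ := by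
      rw [← zpow_natCast, ← zpow_neg]; congr 1; omega
    rw [this, pow_add, inv_mul_eq_div, div_div]

lemma dyadic_zpow (z : ℤ) : IsDyadic ((2:ℝ) ^ z) := by
  simpa using dyadic_zpow_mul z dyadic_one

lemma dyadic_int (a : ℤ) : IsDyadic (a : ℝ) := ⟨a, 0, by norm_num⟩

end PL2Aux

namespace PL2Aux2
open PL2Aux

abbrev Pieces := List (ℝ × ℤ)

noncomputable def xsum (L : Pieces) : ℝ := (L.map Prod.fst).sum
noncomputable def ysum (L : Pieces) : ℝ := (L.map fun p => 2 ^ p.2 * p.1).sum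

def Good (L : Pieces) : Prop := ∀ p ∈ L, 0 < p.1 ∧ IsDyadic p.1

lemma Good.tail {a : ℝ} {z : ℤ} {L : Pieces} (h : Good ((a,z) :: L)) : Good L :=
  fun q hq => h q (List.mem_cons_of_mem _ hq)

lemma Good.head {a : ℝ} {z : ℤ} {L : Pieces} (h : Good ((a,z) :: L)) : 0 < a :=
  (h (a,z) (List.mem_cons_self)).1

lemma Good.head_dyadic {a : ℝ} {z : ℤ} {L : Pieces} (h : Good ((a,z) :: L)) : IsDyadic a :=
  (h (a,z) (List.mem_cons_self)).2

lemma Good.left {L₁ L₂ : Pieces} (h : Good (L₁ ++ L₂)) : Good L₁ :=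
  fun q hq => h q (List.mem_append_left _ hq)

lemma Good.right {L₁ L₂ : Pieces} (h : Good (L₁ ++ L₂)) : Good L₂ :=
  fun q hq => h q (List.mem_append_right _ hq)

noncomputable def pf : Pieces → ℝ → ℝ
  | [], _ => 0
  | (a, z) :: L, t => 2 ^ z * max 0 (min t a) + pf L (t - a)

@[simp] lemma xsum_nil : xsum [] = 0 := rfl
@[simp] lemma ysum_nil : ysum [] = 0 := rfl
@[simp] lemma xsum_cons (a : ℝ) (z : ℤ) (L : Pieces) : xsum ((a,z) :: L) = a + xsum L := rfl
@[simp] lemma ysum_cons (a : ℝ) (z : ℤ) (L : Pieces) :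
    ysum ((a,z) :: L) = 2 ^ z * a + ysum L := rfl
@[simp] lemma pf_nil (t : ℝ) : pf [] t = 0 := rfl
@[simp] lemma pf_cons (a : ℝ) (z : ℤ) (L : Pieces) (t : ℝ) :
    pf ((a,z) :: L) t = 2 ^ z * max 0 (min t a) + pf L (t - a) := rfl

lemma xsum_append (L₁ L₂ : Pieces) : xsum (L₁ ++ L₂) = xsum L₁ + xsum L₂ := by
  simp [xsum]
lemma ysum_append (L₁ L₂ : Pieces) : ysum (L₁ ++ L₂) = ysum L₁ + ysum L₂ := by
  simp [ysum]

lemma xsum_nonneg {L : Pieces} (hG : Good L) : 0 ≤ xsum L := by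
  induction L with
  | nil => simp
  | cons p L ih =>
      obtain ⟨a, z⟩ := p
      have h1 := hG.head
      have h2 := ih hG.tail
      simp only [xsum_cons]; linarith

lemma pf_nonpos {L : Pieces} (hG : Good L) : ∀ {t : ℝ}, t ≤ 0 → pf L t = 0 := by
  induction L with
  | nil => intro t _; rfl
  | cons p L ih =>
      obtain ⟨a, z⟩ := p
      intro t ht
      have ha := hG.head
      rw [pf_cons, ih hG.tail (by linarith),
        max_eq_left (min_le_of_left_le ht), add_zero, mul_zero]

lemma pf_ge {L : Pieces} (hG : Good L) : ∀ {t : ℝ}, xsum L ≤ t → pf L t = ysum L := by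
  induction L with
  | nil => intro t _; rfl
  | cons p L ih =>
      obtain ⟨a, z⟩ := p
      intro t ht
      have ha := hG.head
      have hx := xsum_nonneg hG.tail
      rw [xsum_cons] at ht
      rw [pf_cons, ih hG.tail (by linarith), ysum_cons,
        min_eq_right (by linarith), max_eq_right ha.le]

lemma pf_mono (L : Pieces) : Monotone (pf L) := by
  induction L with
  | nil => exact fun _ _ _ => le_refl _
  | cons p L ih =>
      obtain ⟨a, z⟩ := p
      intro s t hst
      simp only [pf_cons]
      have h1 : max 0 (min s a) ≤ max 0 (min t a) :=
        max_le_max (le_refl _) (min_le_min hst (le_refl _))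
      have h2 : pf L (s - a) ≤ pf L (t - a) := ih (by linarith)
      have hz : (0:ℝ) < 2 ^ z := by positivity
      nlinarith

lemma pf_strict {L : Pieces} (hG : Good L) :
    ∀ {s t : ℝ}, 0 ≤ s → s < t → s < xsum L → pf L s < pf L t := by
  induction L with
  | nil => intro s t hs _ h; rw [xsum_nil] at h; linarith
  | cons p L ih =>
      obtain ⟨a, z⟩ := p
      intro s t hs hst hsx
      have ha := hG.head
      have hz : (0:ℝ) < 2 ^ z := by positivity
      simp only [pf_cons]
      rcases lt_or_ge s a with h | h
      · have h1 : max 0 (min s a) = s := by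
          rw [min_eq_left h.le, max_eq_right hs]
        have h2 : s < max 0 (min t a) := by
          rcases le_or_gt t a with h' | h'
          · rw [min_eq_left h']; exact lt_max_of_lt_right hst
          · rw [min_eq_right h'.le]; exact lt_max_of_lt_right h
        have h3 : pf L (s - a) ≤ pf L (t - a) := pf_mono L (by linarith)
        nlinarith [mul_lt_mul_of_pos_left (h1 ▸ h2) hz]
      · have h1 : max 0 (min s a) = a := by
          rw [min_eq_right h, max_eq_right ha.le]
        have h2 : max 0 (min t a) = a := by
          rw [min_eq_right (by linarith), max_eq_right ha.le]
        have h3 : pf L (s - a) < pf L (t - a) := by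
          refine ih hG.tail (by linarith) (by linarith) ?_
          rw [xsum_cons] at hsx; linarith
        rw [h1, h2]; linarith

lemma pf_piece {L₁ L₂ : Pieces} {a : ℝ} {z : ℤ} (hG : Good (L₁ ++ (a, z) :: L₂)) :
    ∀ {t : ℝ}, xsum L₁ ≤ t → t ≤ xsum L₁ + a →
      pf (L₁ ++ (a, z) :: L₂) t = ysum L₁ + 2 ^ z * (t - xsum L₁) := by
  induction L₁ with
  | nil =>
      intro t h1 h2
      rw [xsum_nil] at h1 h2
      rw [List.nil_append] at hG ⊢
      rw [pf_cons, pf_nonpos hG.tail (by linarith),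
        min_eq_left (by linarith), max_eq_right h1, xsum_nil, ysum_nil]
      ring
  | cons p L ih =>
      obtain ⟨b, w⟩ := p
      intro t h1 h2
      rw [List.cons_append] at hG ⊢
      have hb := hG.head
      have hx : 0 ≤ xsum L := xsum_nonneg hG.tail.left
      rw [xsum_cons] at h1 h2
      simp only [pf_cons, ysum_cons, xsum_cons]
      rw [ih hG.tail (by linarith) (by linarith),
        min_eq_right (by linarith), max_eq_right hb.le]
      ring


noncomputable def X (L : Pieces) (i : ℕ) : ℝ := xsum (L.take i)
noncomputable def Y (L : Pieces) (i : ℕ) : ℝ := ysum (L.take i)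

lemma decomp {L : Pieces} {i : ℕ} (hi : i < L.length) :
    L = L.take i ++ (L.get ⟨i, hi⟩) :: L.drop (i+1) ∧
      X L (i+1) = X L i + (L.get ⟨i, hi⟩).1 := by
  constructor
  · conv_lhs => rw [← List.take_append_drop i L]
    congr 1
    exact List.drop_eq_getElem_cons hi
  · unfold X
    rw [List.take_succ]
    have : L[i]? = some (L.get ⟨i, hi⟩) := by
      rw [List.getElem?_eq_getElem hi]; rfl
    rw [this, xsum_append]
    simp [xsum, add_comm]

lemma xsum_dyadic {L : Pieces} (hG : Good L) : IsDyadic (xsum L) := by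
  induction L with
  | nil => exact dyadic_zero
  | cons p L ih =>
      obtain ⟨a, z⟩ := p
      rw [xsum_cons]
      exact dyadic_add hG.head_dyadic (ih hG.tail)

lemma X_dyadic {L : Pieces} (hG : Good L) (i : ℕ) : IsDyadic (X L i) :=
  xsum_dyadic (fun q hq => hG q (List.take_subset i L hq))

theorem master {L : Pieces} (hG : Good L) (hx1 : xsum L = 1) (hy1 : ysum L = 1) :
    PL2Fun (pf L) := by
  have hne : L ≠ [] := by rintro rfl; rw [xsum_nil] at hx1; norm_num at hx1
  have hxlast : X L L.length = 1 := by unfold X; rw [List.take_length, hx1]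
  have hX0 : X L 0 = 0 := rfl
  have hstep : ∀ i : ℕ, i < L.length → X L i < X L (i + 1) := by
    intro i hi
    have hi' : i < L.length := by omega
    obtain ⟨hdec, hXs⟩ := decomp hi'
    have hpos : 0 < (L.get ⟨i, hi'⟩).1 := (hG _ (List.get_mem L ⟨i, hi'⟩)).1
    rw [hXs]; linarith
  refine ⟨pf_nonpos hG le_rfl, by rw [pf_ge hG (le_of_eq hx1), hy1], ?_, L.length,
    fun i => X L i, ?_, hX0, ?_, fun i => X_dyadic hG i, ?_⟩
  · intro s hs t ht hst
    exact pf_strict hG hs.1 hst (lt_of_lt_of_le hst (le_of_le_of_eq ht.2 hx1.symm))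
  · rw [Fin.strictMono_iff_lt_succ]
    intro i
    exact hstep i (by omega)
  · show X L ((Fin.last L.length : Fin (L.length+1)) : ℕ) = 1
    rw [Fin.val_last]; exact hxlast
  · intro i
    have hi' : (i : ℕ) < L.length := i.2
    obtain ⟨hdec, hXs⟩ := decomp hi'
    set a := (L.get ⟨i, hi'⟩).1
    set z := (L.get ⟨i, hi'⟩).2
    refine ⟨z, Y L i - 2 ^ z * X L i, ?_⟩
    intro s hs
    have h1 : X L i ≤ s := by simpa using hs.1
    have h2 : s ≤ X L i + a := by
      have := hs.2
      simp only [Fin.val_succ] at this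
      rw [hXs] at this
      simpa using this
    have := pf_piece (L₁ := L.take i) (L₂ := L.drop (i+1)) (a := a) (z := z)
      (by rw [← hdec]; exact hG) (t := s) h1 h2
    rw [← hdec] at this
    rw [this]
    unfold X Y
    ring


lemma sum_pows_rep (P : ℕ) (E : ℤ) (hP : 0 < P) :
    ∀ kk : ℕ, ∃ Z : List ℤ, Z.length = P + kk ∧
      (Z.map fun z => (2:ℝ) ^ z).sum = (P : ℝ) * 2 ^ E := by
  intro kk
  induction kk with
  | zero =>
      refine ⟨List.replicate P E, by simp, ?_⟩
      rw [List.map_replicate, List.sum_replicate, nsmul_eq_mul]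
  | succ kk ih =>
      obtain ⟨Z, hlen, hsum⟩ := ih
      match Z, hlen with
      | z :: Z', hlen =>
          refine ⟨(z-1) :: (z-1) :: Z', by simp at hlen ⊢; omega, ?_⟩
          simp only [List.map_cons, List.sum_cons] at hsum ⊢
          have : (2:ℝ) ^ (z-1) + (2:ℝ) ^ (z-1) = 2 ^ z := by
            rw [← two_mul, ← zpow_one_add₀ (by norm_num : (2:ℝ) ≠ 0)]
            congr 1; ring
          linarith
      | [], hlen => simp at hlen; omega

lemma rep_of_dyadic {x : ℝ} (hx : IsDyadic x) (hpos : 0 < x) :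
    ∃ (P : ℕ) (E : ℤ), 0 < P ∧ x = (P : ℝ) * 2 ^ E := by
  obtain ⟨a, b, rfl⟩ := hx
  have ha : 0 < a := by
    by_contra h
    push_neg at h
    have : (a:ℝ) ≤ 0 := by exact_mod_cast h
    have h2 : (0:ℝ) < 2 ^ b := by positivity
    nlinarith [div_nonpos_of_nonpos_of_nonneg this h2.le]
  refine ⟨a.toNat, -b, by omega, ?_⟩
  rw [div_eq_mul_inv, ← zpow_natCast (2:ℝ) b, ← zpow_neg]
  congr 2
  omega

lemma zip_xsum : ∀ (Z W : List ℤ), Z.length = W.length →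
    xsum ((Z.zip W).map fun p => ((2:ℝ) ^ p.1, p.2 - p.1)) = (Z.map fun z => (2:ℝ) ^ z).sum
  | [], [], _ => by simp [xsum]
  | z :: Z, w :: W, h => by
      simp only [List.zip_cons_cons, List.map_cons, List.sum_cons, xsum_cons]
      rw [zip_xsum Z W (by simpa using h)]

lemma zip_ysum : ∀ (Z W : List ℤ), Z.length = W.length →
    ysum ((Z.zip W).map fun p => ((2:ℝ) ^ p.1, p.2 - p.1)) = (W.map fun z => (2:ℝ) ^ z).sum
  | [], [], _ => by simp [ysum]
  | z :: Z, w :: W, h => by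
      simp only [List.zip_cons_cons, List.map_cons, List.sum_cons, ysum_cons]
      rw [zip_ysum Z W (by simpa using h)]
      congr 1
      rw [← zpow_add₀ (by norm_num : (2:ℝ) ≠ 0)]
      congr 1
      ring

lemma lemC {x y : ℝ} (hx : IsDyadic x) (hy : IsDyadic y) (hxp : 0 < x) (hyp : 0 < y) :
    ∃ L : Pieces, Good L ∧ L ≠ [] ∧ xsum L = x ∧ ysum L = y := by
  obtain ⟨P, E, hP, rfl⟩ := rep_of_dyadic hx hxp
  obtain ⟨Q, F, hQ, rfl⟩ := rep_of_dyadic hy hyp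
  obtain ⟨Z, hZlen, hZsum⟩ := sum_pows_rep P E hP Q
  obtain ⟨W, hWlen, hWsum⟩ := sum_pows_rep Q F hQ P
  have hlen : Z.length = W.length := by omega
  refine ⟨Z.zip W |>.map (fun p => ((2:ℝ) ^ p.1, p.2 - p.1)), ?_, ?_, ?_, ?_⟩
  · intro p hp
    simp only [List.mem_map] at hp
    obtain ⟨q, _, rfl⟩ := hp
    exact ⟨by positivity, dyadic_zpow _⟩
  · intro h
    have := congrArg List.length h
    rw [List.length_map, List.length_zip, hlen, min_self, List.length_nil] at this
    omega
  · rw [zip_xsum Z W hlen, hZsum]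
  · rw [zip_ysum Z W hlen, hWsum]


lemma dyadic_btwn {a b : ℝ} (h : a < b) : ∃ d : ℝ, IsDyadic d ∧ a < d ∧ d < b := by
  obtain ⟨nn, hnn⟩ : ∃ nn : ℕ, ((1:ℝ)/2) ^ nn < b - a :=
    exists_pow_lt_of_lt_one (by linarith) (by norm_num)
  have h2 : (0:ℝ) < 2 ^ nn := by positivity
  refine ⟨(⌊a * 2 ^ nn⌋ + 1 : ℤ) / 2 ^ nn, dyadic_def, ?_, ?_⟩
  · rw [lt_div_iff₀ h2]
    push_cast
    exact Int.lt_floor_add_one (a * 2 ^ nn)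
  · rw [div_lt_iff₀ h2]
    have h3 : (⌊a * 2 ^ nn⌋ : ℝ) ≤ a * 2 ^ nn := Int.floor_le _
    have h4 : ((1:ℝ)/2) ^ nn = (2 ^ nn)⁻¹ := by
      rw [div_pow, one_pow, inv_eq_one_div]
    rw [h4] at hnn
    have h5 : (1:ℝ) < (b - a) * 2 ^ nn := by
      rw [inv_lt_iff_one_lt_mul₀ h2] at hnn
      linarith [hnn]
    push_cast
    nlinarith

/-- Backward direction core: if `β = 2^s * α + d` with `d` dyadic, then some
PL₂ map sends `α` to `β`. -/
lemma construct {α β : ℝ} {s : ℤ} {d : ℝ} (hd : IsDyadic d)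
    (hαβ : β = 2 ^ s * α + d) (hα1 : α ∈ Set.Ioo (0:ℝ) 1) (hβ1 : β ∈ Set.Ioo (0:ℝ) 1) :
    ∃ g : ℝ → ℝ, PL2Fun g ∧ g α = β := by
  obtain ⟨hα0, hα1'⟩ := hα1
  obtain ⟨hβ0, hβ1'⟩ := hβ1
  have hs : (0:ℝ) < 2 ^ s := by positivity
  -- choose p < α dyadic with q := 2^s p + d ∈ (0, β)
  have hlo : max 0 (-d / 2 ^ s) < α := by
    rw [max_lt_iff]
    constructor
    · exact hα0
    · rw [div_lt_iff₀ hs]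
      nlinarith
  obtain ⟨p, hpd, hp1, hp2⟩ := dyadic_btwn hlo
  have hp0 : 0 < p := lt_of_le_of_lt (le_max_left _ _) hp1
  have hpα : p < α := hp2
  set q := 2 ^ s * p + d with hq
  have hq0 : 0 < q := by
    have : -d / 2 ^ s < p := lt_of_le_of_lt (le_max_right _ _) hp1
    rw [div_lt_iff₀ hs] at this
    rw [hq]; nlinarith
  have hqβ : q < β := by rw [hq, hαβ]; nlinarith
  have hqd : IsDyadic q := dyadic_add (dyadic_zpow_mul s hpd) hd
  -- choose p' > α dyadic with q' := 2^s p' + d ∈ (β, 1)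
  have hhi : α < min 1 ((1 - d) / 2 ^ s) := by
    rw [lt_min_iff]
    refine ⟨hα1', ?_⟩
    rw [lt_div_iff₀ hs]
    nlinarith
  obtain ⟨p', hpd', hp1', hp2'⟩ := dyadic_btwn hhi
  have hp'1 : p' < 1 := lt_of_lt_of_le hp2' (min_le_left _ _)
  have hαp' : α < p' := hp1'
  set q' := 2 ^ s * p' + d with hq'
  have hq'1 : q' < 1 := by
    have : p' < (1 - d) / 2 ^ s := lt_of_lt_of_le hp2' (min_le_right _ _)
    rw [lt_div_iff₀ hs] at this
    rw [hq']; nlinarith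
  have hβq' : β < q' := by rw [hq', hαβ]; nlinarith
  have hqd' : IsDyadic q' := dyadic_add (dyadic_zpow_mul s hpd') hd
  -- pieces
  obtain ⟨L₁, hG1, _, hx1, hy1⟩ := lemC hpd hqd hp0 hq0
  obtain ⟨L₂, hG2, _, hx2, hy2⟩ :=
    lemC (dyadic_sub dyadic_one hpd') (dyadic_sub dyadic_one hqd')
      (by linarith) (by linarith)
  set L : Pieces := L₁ ++ (p' - p, s) :: L₂ with hL
  have hGm : Good ((p' - p, s) :: L₂) := by
    intro r hr
    rcases List.mem_cons.1 hr with h | h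
    · rw [h]; exact ⟨by simp; linarith, by simpa using dyadic_sub hpd' hpd⟩
    · exact hG2 r h
  have hG : Good L := by
    intro r hr
    rcases List.mem_append.1 hr with h | h
    · exact hG1 r h
    · exact hGm r h
  have hxs : xsum L = 1 := by
    rw [hL, xsum_append, xsum_cons, hx1, hx2]; ring
  have hys : ysum L = 1 := by
    rw [hL, ysum_append, ysum_cons, hy1, hy2, hq', hq]; ring
  refine ⟨pf L, master hG hxs hys, ?_⟩
  have := pf_piece (L₁ := L₁) (L₂ := L₂) (a := p' - p) (z := s) (hL ▸ hG)
    (t := α) (by rw [hx1]; linarith) (by rw [hx1]; linarith)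
  rw [hL, this, hx1, hy1, hq, hαβ]
  ring

end PL2Aux2

lemma exists_piece : ∀ {N : ℕ} {x : Fin (N+1) → ℝ} {α : ℝ},
    x 0 ≤ α → α < x (Fin.last N) →
    ∃ i : Fin N, x i.castSucc ≤ α ∧ α < x i.succ := by
  intro N
  induction N with
  | zero =>
      intro x α h0 hlast
      exfalso
      have : Fin.last 0 = 0 := rfl
      rw [this] at hlast
      linarith
  | succ N ih =>
      intro x α h0 hlast
      rcases le_or_gt (x (Fin.last N).castSucc) α with h | h
      · refine ⟨Fin.last N, h, ?_⟩
        have : (Fin.last N).succ = Fin.last (N+1) := rfl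
        rw [this]
        exact hlast
      · have h0' : (x ∘ Fin.castSucc) 0 ≤ α := by
          have : (Fin.castSucc (0 : Fin (N+1))) = 0 := rfl
          simpa [Function.comp, this] using h0
        have hl' : α < (x ∘ Fin.castSucc) (Fin.last N) := by
          simpa [Function.comp] using h
        obtain ⟨i, h1, h2⟩ := ih h0' hl'
        refine ⟨i.castSucc, ?_, ?_⟩
        · simpa [Function.comp] using h1
        · have : x i.castSucc.succ = (x ∘ Fin.castSucc) i.succ := by
            rw [Function.comp_apply, Fin.succ_castSucc]
          rw [this]
          exact h2

open PL2Aux PL2Aux2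

theorem stmt0 (m n u : ℕ) (t k : ℤ) (α β : ℝ)
    (hm : Odd m) (hn : Odd n) (hu : Odd u)
    (hmn : Nat.Coprime m n) (hun : Nat.Coprime u n)
    (hα : α = (2 : ℝ) ^ t * m / n) (hβ : β = (2 : ℝ) ^ k * u / n)
    (hα1 : α ∈ Set.Ioo (0 : ℝ) 1) (hβ1 : β ∈ Set.Ioo (0 : ℝ) 1) :
    (∃ g : ℝ → ℝ, PL2Fun g ∧ g α = β) ↔
      ∃ R : ℤ, (u : ZMod n) =
        ((ZMod.unitOfCoprime 2 (Nat.coprime_two_left.mpr hn) ^ R : (ZMod n)ˣ) : ZMod n)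
          * (m : ZMod n) := by
  classical
  have hn0 : n ≠ 0 := by rintro rfl; exact (Nat.not_odd_iff_even.2 Even.zero) hn
  haveI : NeZero n := ⟨hn0⟩
  have hnR : (0:ℝ) < n := by positivity
  set w : (ZMod n)ˣ := ZMod.unitOfCoprime 2 (Nat.coprime_two_left.mpr hn) with hwdef
  have hw : ((w : (ZMod n)ˣ) : ZMod n) = 2 := ZMod.coe_unitOfCoprime _ _
  have hwpow : ∀ KK : ℕ, ((w ^ (KK:ℤ) : (ZMod n)ˣ) : ZMod n) = 2 ^ KK := by
    intro KK
    rw [zpow_natCast, Units.val_pow_eq_pow_val, hw]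
  constructor
  · -- forward
    rintro ⟨g, ⟨hg0, hg1, hgmono, N, x, hxmono, hx0, hxlast, hxdyadic, hpieces⟩, hgα⟩
    obtain ⟨hα0, hα1'⟩ := hα1
    obtain ⟨hβ0, hβ1'⟩ := hβ1
    -- find the piece containing α
    obtain ⟨i, hxi, hxsucc⟩ := exists_piece (x := x) (α := α)
      (by rw [hx0]; linarith) (by rw [hxlast]; linarith)
    -- g of breakpoints is dyadic
    have hD : ∀ j : ℕ, ∀ hj : j < N + 1, IsDyadic (g (x ⟨j, hj⟩)) := by
      intro j
      induction j with
      | zero =>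
          intro hj
          have : (⟨0, hj⟩ : Fin (N+1)) = 0 := by ext; simp
          rw [this, hx0, hg0]
          exact dyadic_zero
      | succ j ih =>
          intro hj
          have hjN : j < N := by omega
          obtain ⟨κ, c, hpc⟩ := hpieces ⟨j, hjN⟩
          have hcs' : (⟨j, hjN⟩ : Fin N).castSucc = ⟨j, by omega⟩ := rfl
          have hsc' : (⟨j, hjN⟩ : Fin N).succ = ⟨j+1, hj⟩ := rfl
          have hmono' : x (⟨j, hjN⟩ : Fin N).castSucc ≤ x (⟨j, hjN⟩ : Fin N).succ :=
            le_of_lt (hxmono (Fin.castSucc_lt_succ))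
          have e1 := hpc (x (⟨j, hjN⟩ : Fin N).castSucc) ⟨le_rfl, hmono'⟩
          have e2 := hpc (x (⟨j, hjN⟩ : Fin N).succ) ⟨hmono', le_rfl⟩
          have : g (x ⟨j+1, hj⟩) = g (x ⟨j, by omega⟩)
              + 2 ^ κ * (x (⟨j, hjN⟩ : Fin N).succ - x (⟨j, hjN⟩ : Fin N).castSucc) := by
            rw [← hsc', ← hcs', e1, e2]; ring
          rw [this]
          exact dyadic_add (ih (by omega))
            (dyadic_zpow_mul κ (dyadic_sub (hxdyadic _) (hxdyadic _)))
    obtain ⟨κ, c, hpc⟩ := hpieces i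
    have hβα : β = 2 ^ κ * α + c := by
      rw [← hgα]
      exact hpc α ⟨hxi, le_of_lt hxsucc⟩
    have hcd : IsDyadic c := by
      have hmono' : x i.castSucc ≤ x i.succ := le_of_lt (hxmono (Fin.castSucc_lt_succ))
      have e1 := hpc (x i.castSucc) ⟨le_rfl, hmono'⟩
      have hrep : c = g (x i.castSucc) - 2 ^ κ * x i.castSucc := by linarith
      rw [hrep]
      have hDi := hD (i.castSucc : ℕ) i.castSucc.isLt
      rw [Fin.eta] at hDi
      exact dyadic_sub hDi (dyadic_zpow_mul κ (hxdyadic _))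
    obtain ⟨a, b, hab⟩ := hcd
    -- derive integer congruence
    set B : ℕ := (-k).toNat + (-(κ + t)).toNat with hBdef
    set K₁ : ℕ := (k + b + B).toNat with hK₁def
    set K₂ : ℕ := (κ + t + b + B).toNat with hK₂def
    have hkB : (K₁ : ℤ) = k + b + B := by
      rw [hK₁def]; rw [Int.toNat_of_nonneg (by omega)]
    have hκB : (K₂ : ℤ) = κ + t + b + B := by
      rw [hK₂def]; rw [Int.toNat_of_nonneg (by omega)]
    have h2ne : (2:ℝ) ≠ 0 := two_ne_zero
    have e1 : ((2:ℝ)) ^ K₁ = 2 ^ k * 2 ^ (b:ℤ) * 2 ^ (B:ℤ) := by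
      rw [← zpow_natCast (2:ℝ) K₁, ← zpow_add₀ h2ne, ← zpow_add₀ h2ne, hkB]
    have e2 : ((2:ℝ)) ^ K₂ = 2 ^ κ * 2 ^ t * 2 ^ (b:ℤ) * 2 ^ (B:ℤ) := by
      rw [← zpow_natCast (2:ℝ) K₂, ← zpow_add₀ h2ne, ← zpow_add₀ h2ne, ← zpow_add₀ h2ne, hκB]
    have e3 : ((2:ℝ)) ^ B = 2 ^ (B:ℤ) := (zpow_natCast _ _).symm
    have e4 : ((2:ℝ)) ^ b = 2 ^ (b:ℤ) := (zpow_natCast _ _).symm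
    have hb0 : ((2:ℝ)) ^ (b:ℤ) ≠ 0 := by positivity
    have hB0 : ((2:ℝ)) ^ (B:ℤ) ≠ 0 := by positivity
    have hnR' : (n:ℝ) ≠ 0 := ne_of_gt hnR
    have key : ((2:ℝ)) ^ K₁ * u = 2 ^ K₂ * m + a * 2 ^ B * n := by
      rw [e1, e2, e3]
      simp only [zpow_natCast]
      rw [hα, hβ, hab, e4] at hβα
      field_simp at hβα
      have h3 : ((2:ℝ) ^ k * u * 2 ^ b) * n = ((2 ^ κ * (2 ^ t * m)) * 2 ^ b + a * n) * n := by
        rw [e4]; linear_combination (n:ℝ) * hβα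
      have h4 := mul_right_cancel₀ hnR' h3
      linear_combination 2 ^ B * h4
    have keyZ : (2:ℤ) ^ K₁ * u = 2 ^ K₂ * m + a * 2 ^ B * n := by exact_mod_cast key
    have hzm : (2:ZMod n) ^ K₁ * u = 2 ^ K₂ * m := by
      have := congrArg (fun z : ℤ => (z : ZMod n)) keyZ
      push_cast at this
      rwa [ZMod.natCast_self, mul_zero, add_zero] at this
    refine ⟨(K₂ : ℤ) - K₁, ?_⟩
    have hsplit : w ^ ((K₂:ℤ) - K₁) = w ^ (-(K₁:ℤ)) * w ^ ((K₂:ℤ)) := by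
      rw [← zpow_add]; congr 1; ring
    calc (u : ZMod n) = ↑(w ^ (-(K₁:ℤ))) * (↑(w ^ ((K₁:ℤ))) * u) := by
          rw [← mul_assoc, ← Units.val_mul, ← zpow_add, neg_add_cancel, zpow_zero,
            Units.val_one, one_mul]
      _ = ↑(w ^ (-(K₁:ℤ))) * (2 ^ K₂ * m) := by rw [hwpow K₁, hzm]
      _ = ↑(w ^ ((K₂:ℤ) - K₁)) * m := by
          rw [hsplit, Units.val_mul, mul_assoc, hwpow K₂]
  · -- backward
    rintro ⟨R, hR⟩
    have hω : 0 < orderOf w := orderOf_pos w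
    set R₂ : ℤ := R + ((-R).toNat : ℤ) * orderOf w with hR₂def
    have hR₂0 : 0 ≤ R₂ := by
      rcases le_or_gt 0 R with h | h
      · have : (0:ℤ) ≤ ((-R).toNat : ℤ) * orderOf w := by positivity
        omega
      · have h1 : ((-R).toNat : ℤ) = -R := by omega
        have h2 : (-R : ℤ) ≤ (-R) * orderOf w := le_mul_of_one_le_right (by omega)
          (by exact_mod_cast hω)
        rw [hR₂def, h1]; omega
    set K : ℕ := R₂.toNat with hKdef
    have hKR₂ : (K : ℤ) = R₂ := Int.toNat_of_nonneg hR₂0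
    have hwK : w ^ ((K:ℤ)) = w ^ R := by
      rw [hKR₂, hR₂def, zpow_add, mul_comm (((-R).toNat : ℤ)) ((orderOf w : ℤ)), zpow_mul,
        zpow_natCast, zpow_natCast, pow_orderOf_eq_one, one_pow, mul_one]
    have hR' : (u : ZMod n) = 2 ^ K * m := by
      rw [hR, ← hwK, hwpow K]
    -- integer congruence
    have hdvd : (n:ℤ) ∣ 2 ^ K * m - u := by
      rw [← ZMod.intCast_zmod_eq_zero_iff_dvd]
      push_cast
      rw [← hR']
      ring
    obtain ⟨c, hc⟩ := hdvd
    have hu : (u:ℝ) = 2 ^ (K:ℤ) * m - n * c := by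
      have h5 : ((2:ℤ) ^ K * m - u : ℤ) = n * c := hc
      have h6 : ((2:ℝ)) ^ (K:ℕ) * m - u = n * c := by exact_mod_cast h5
      rw [← zpow_natCast (2:ℝ) K] at h6
      linarith
    have hd : IsDyadic (-(c:ℝ) * 2 ^ k) := by
      have : IsDyadic (2 ^ k * (((-c : ℤ) : ℝ))) := dyadic_zpow_mul k (dyadic_int (-c))
      rwa [Int.cast_neg, mul_comm] at this
    apply construct (s := k + K - t) hd _ hα1 hβ1
    have h2ne : (2:ℝ) ≠ 0 := two_ne_zero
    have e1 : ((2:ℝ)) ^ (k + (K:ℤ) - t) = 2 ^ k * 2 ^ (K:ℤ) / 2 ^ t := by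
      rw [zpow_sub₀ h2ne, zpow_add₀ h2ne]
    have ht0 : ((2:ℝ)) ^ t ≠ 0 := by positivity
    have hnR' : (n:ℝ) ≠ 0 := ne_of_gt hnR
    rw [hβ, hα, hu, e1]
    field_simp
    ring
end

section
/- Two points t, u ∈ (0,1) are in the same orbit under Thompson's group F (acting on [0,1]) if and only if their binary expansions have the same tail, i.e., there exist finite binary strings μ, ν and an infinite binary string ω such that t = .μω and u = .νω in binary. -/
/-- The real number with binary expansion `.d₀d₁d₂…`. -/
noncomputable def binVal (d : ℕ → Bool) : ℝ :=
  ∑' i : ℕ, (if d i then (1 : ℝ) else 0) / 2 ^ (i + 1)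

/-- The infinite binary string obtained by prepending the finite string `μ` to `ω`. -/
def prependStr (μ : List Bool) (ω : ℕ → Bool) : ℕ → Bool :=
  fun i => if h : i < μ.length then μ.get ⟨i, h⟩ else ω (i - μ.length)

lemma IsDyadic.zero : IsDyadic 0 := ⟨0, 0, by norm_num⟩

lemma IsDyadic.add {x y : ℝ} (hx : IsDyadic x) (hy : IsDyadic y) : IsDyadic (x + y) := by
  obtain ⟨a, b, rfl⟩ := hx; obtain ⟨c, d, rfl⟩ := hy
  refine ⟨a * 2 ^ d + c * 2 ^ b, b + d, ?_⟩
  rw [pow_add]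
  push_cast
  rw [div_add_div _ _ (by positivity : ((2:ℝ)^b) ≠ 0) (by positivity : ((2:ℝ)^d) ≠ 0)]
  ring

lemma IsDyadic.sub {x y : ℝ} (hx : IsDyadic x) (hy : IsDyadic y) : IsDyadic (x - y) := by
  obtain ⟨a, b, rfl⟩ := hx; obtain ⟨c, d, rfl⟩ := hy
  refine ⟨a * 2 ^ d - c * 2 ^ b, b + d, ?_⟩
  rw [pow_add]
  push_cast
  rw [div_sub_div _ _ (by positivity : ((2:ℝ)^b) ≠ 0) (by positivity : ((2:ℝ)^d) ≠ 0)]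
  ring

lemma IsDyadic.natdiv (p m : ℕ) : IsDyadic ((p : ℝ) / 2 ^ m) := ⟨p, m, by push_cast; ring⟩

lemma IsDyadic.one_div (m : ℕ) : IsDyadic ((1 : ℝ) / 2 ^ m) := ⟨1, m, by push_cast; ring⟩

lemma IsDyadic.zpow_mul {x : ℝ} (k : ℤ) (hx : IsDyadic x) : IsDyadic ((2 : ℝ) ^ k * x) := by
  obtain ⟨a, b, rfl⟩ := hx
  rcases le_or_gt 0 k with hk | hk
  · refine ⟨a * 2 ^ k.toNat, b, ?_⟩
    have : (2:ℝ) ^ k = 2 ^ k.toNat := by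
      rw [← zpow_natCast, Int.toNat_of_nonneg hk]
    rw [this]; push_cast; ring
  · refine ⟨a, b + (-k).toNat, ?_⟩
    have h2 : (2:ℝ) ^ ((-k).toNat) = 2 ^ (-k : ℤ) := by
      rw [← zpow_natCast, Int.toNat_of_nonneg (by omega : (0:ℤ) ≤ -k)]
    rw [pow_add, h2, zpow_neg]
    have h3 : (2:ℝ) ^ k ≠ 0 := zpow_ne_zero _ (by norm_num)
    field_simp

lemma half_pow_summable : Summable (fun i : ℕ => (1/2:ℝ)^(i+1)) := by
  have h : Summable (fun i : ℕ => (1/2:ℝ) * (1/2)^i) :=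
    (summable_geometric_of_lt_one (by norm_num) (by norm_num)).mul_left _
  apply h.congr
  intro i
  rw [pow_succ]
  ring

lemma half_pow_tsum : ∑' i : ℕ, (1/2:ℝ)^(i+1) = 1 := by
  have h : ∀ i : ℕ, (1/2:ℝ)^(i+1) = (1/2) * (1/2)^i := by
    intro i; rw [pow_succ]; ring
  rw [tsum_congr h, tsum_mul_left, tsum_geometric_of_lt_one (by norm_num) (by norm_num)]
  norm_num

lemma binVal_term_le (d : ℕ → Bool) (i : ℕ) :
    (if d i then (1 : ℝ) else 0) / 2 ^ (i + 1) ≤ (1/2:ℝ)^(i+1) := by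
  rw [div_pow, one_pow]
  rcases Bool.dichotomy (d i) with h | h <;> simp [h] <;> positivity

lemma binVal_summable (d : ℕ → Bool) :
    Summable (fun i : ℕ => (if d i then (1 : ℝ) else 0) / 2 ^ (i + 1)) :=
  Summable.of_nonneg_of_le (fun i => by positivity) (binVal_term_le d) half_pow_summable

lemma binVal_nonneg (d : ℕ → Bool) : 0 ≤ binVal d :=
  tsum_nonneg (fun i => by positivity)

lemma binVal_le_one (d : ℕ → Bool) : binVal d ≤ 1 := by
  have h := Summable.tsum_le_tsum (binVal_term_le d) (binVal_summable d) half_pow_summable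
  rw [half_pow_tsum] at h
  exact h

lemma binVal_shift (d : ℕ → Bool) :
    binVal d = (if d 0 then (1:ℝ) else 0) / 2 + binVal (fun i => d (i + 1)) / 2 := by
  unfold binVal
  rw [← Summable.sum_add_tsum_nat_add 1 (binVal_summable d)]
  simp only [Finset.sum_range_one, pow_one, pow_zero, zero_add]
  congr 1
  rw [← tsum_div_const]
  apply tsum_congr
  intro i
  rw [pow_succ]
  ring

lemma binVal_const_false : binVal (fun _ => false) = 0 := by
  unfold binVal; simp

lemma binVal_const_true : binVal (fun _ => true) = 1 := by
  unfold binVal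
  have : ∀ i : ℕ, (if (fun _ => true) i = true then (1:ℝ) else 0) / 2 ^ (i+1) = (1/2:ℝ)^(i+1) := by
    intro i
    rw [div_pow, one_pow]
    simp
  rw [tsum_congr this, half_pow_tsum]

/-- big-endian value of a finite binary string -/
def strVal : List Bool → ℕ
  | [] => 0
  | b :: μ => (cond b 1 0) * 2 ^ μ.length + strVal μ

lemma strVal_lt (μ : List Bool) : strVal μ < 2 ^ μ.length := by
  induction μ with
  | nil => simp [strVal]
  | cons b μ ih =>
    simp only [strVal, List.length_cons, pow_succ]
    rcases Bool.dichotomy b with h | h <;> simp [h] <;> omega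

lemma strVal_pos {μ : List Bool} (h : true ∈ μ) : 1 ≤ strVal μ := by
  induction μ with
  | nil => simp at h
  | cons b μ ih =>
    simp only [strVal]
    rcases Bool.dichotomy b with hb | hb
    · subst hb
      simp only [List.mem_cons] at h
      rcases h with h | h
      · exact absurd h.symm (by simp)
      · simpa using ih h
    · subst hb
      have : 0 < 2 ^ μ.length := Nat.pow_pos (by norm_num)
      simp; omega

lemma strVal_upper {μ : List Bool} (h : false ∈ μ) : strVal μ + 2 ≤ 2 ^ μ.length := by
  induction μ with
  | nil => simp at h
  | cons b μ ih =>
    have hlt := strVal_lt μ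
    have h2 : 0 < 2 ^ μ.length := Nat.pow_pos (by norm_num)
    simp only [strVal, List.length_cons, pow_succ]
    rcases Bool.dichotomy b with hb | hb
    · subst hb; simp; omega
    · subst hb
      simp only [List.mem_cons] at h
      rcases h with h | h
      · exact absurd h.symm (by simp)
      · have := ih h
        simp; omega

lemma strVal_append (μ ρ : List Bool) :
    strVal (μ ++ ρ) = strVal μ * 2 ^ ρ.length + strVal ρ := by
  induction μ with
  | nil => simp [strVal]
  | cons b μ ih =>
    simp only [List.cons_append, strVal, List.append_eq, List.length_append, ih, pow_add]
    ring

lemma prependStr_nil (ω : ℕ → Bool) : prependStr [] ω = ω := by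
  funext i; simp [prependStr]

lemma prependStr_cons_zero (b : Bool) (μ : List Bool) (ω : ℕ → Bool) :
    prependStr (b :: μ) ω 0 = b := by simp [prependStr]

lemma prependStr_cons_succ (b : Bool) (μ : List Bool) (ω : ℕ → Bool) (i : ℕ) :
    prependStr (b :: μ) ω (i + 1) = prependStr μ ω i := by
  simp only [prependStr, List.length_cons]
  rcases lt_or_ge i μ.length with h | h
  · rw [dif_pos (by omega), dif_pos h]
    simp
  · rw [dif_neg (by omega), dif_neg (by omega)]
    congr 1
    omega

lemma binVal_prependStr (μ : List Bool) (ω : ℕ → Bool) :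
    binVal (prependStr μ ω) = ((strVal μ : ℝ) + binVal ω) / 2 ^ μ.length := by
  induction μ with
  | nil => simp [prependStr_nil, strVal]
  | cons b μ ih =>
    rw [binVal_shift]
    have h1 : (fun i => prependStr (b :: μ) ω (i + 1)) = prependStr μ ω := by
      funext i; exact prependStr_cons_succ b μ ω i
    rw [h1, prependStr_cons_zero, ih]
    show _ = ((strVal (b :: μ) : ℝ) + binVal ω) / 2 ^ (μ.length + 1)
    simp only [strVal]
    push_cast
    rcases Bool.dichotomy b with hb | hb <;> subst hb <;> simp <;> rw [pow_succ] <;> field_simp <;> ring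

lemma prependStr_append (μ ρ : List Bool) (σ : ℕ → Bool) :
    prependStr (μ ++ ρ) σ = prependStr μ (prependStr ρ σ) := by
  funext i
  simp only [prependStr, List.length_append, List.get_eq_getElem]
  split_ifs with h1 h2 h3
  · exact List.getElem_append_left h2
  · rw [List.getElem_append_right (by omega)]
  · omega
  · omega
  · omega
  · congr 1; omega

lemma prependStr_ofFn_shift (ω : ℕ → Bool) (k : ℕ) :
    prependStr (List.ofFn (fun i : Fin k => ω i)) (fun i => ω (i + k)) = ω := by
  funext i
  simp only [prependStr, List.length_ofFn]
  rcases lt_or_ge i k with h | h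
  · rw [dif_pos h]
    simp [List.get_ofFn]
  · rw [dif_neg (by omega)]
    congr 1
    omega

/-- the i-th binary digit of a real number in [0,1) -/
noncomputable def rdigit (w : ℝ) (i : ℕ) : Bool :=
  decide ((1:ℝ)/2 ≤ Int.fract (2 ^ i * w))

lemma rdigit_partial (w : ℝ) (hw0 : 0 ≤ w) (hw1 : w < 1) (n : ℕ) :
    ∑ i ∈ Finset.range n, (if rdigit w i then (1:ℝ) else 0) / 2 ^ (i + 1)
      = (⌊2 ^ n * w⌋ : ℝ) / 2 ^ n := by
  induction n with
  | zero =>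
    have h0 : ⌊w⌋ = 0 := Int.floor_eq_zero_iff.mpr ⟨hw0, hw1⟩
    simp [h0]
  | succ n ih =>
    rw [Finset.sum_range_succ, ih]
    have key : ⌊2 ^ (n+1) * w⌋ = 2 * ⌊2 ^ n * w⌋ + (if rdigit w n then 1 else 0) := by
      have h2 : (2:ℝ) ^ (n+1) * w = (2 * ⌊2 ^ n * w⌋ : ℤ) + 2 * Int.fract (2 ^ n * w) := by
        rw [Int.fract]
        push_cast
        ring
      rw [h2, Int.floor_intCast_add]
      congr 1
      have hf0 : 0 ≤ Int.fract (2 ^ n * w) := Int.fract_nonneg _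
      have hf1 : Int.fract (2 ^ n * w) < 1 := Int.fract_lt_one _
      rcases Bool.dichotomy (rdigit w n) with h | h <;> simp only [h, if_true, if_false]
      · have : ¬ ((1:ℝ)/2 ≤ Int.fract (2 ^ n * w)) := by
          simpa [rdigit] using h
        simp only [Bool.false_eq_true, if_false]
        exact Int.floor_eq_zero_iff.mpr ⟨by linarith, by linarith⟩
      · have : (1:ℝ)/2 ≤ Int.fract (2 ^ n * w) := by
          simpa [rdigit] using h
        rw [Int.floor_eq_iff]
        push_cast
        constructor <;> linarith
    rw [key]
    push_cast
    rcases Bool.dichotomy (rdigit w n) with h | h <;> simp only [h, if_true, if_false] <;>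
      rw [pow_succ] <;> field_simp <;> ring

lemma binVal_rdigit {w : ℝ} (hw0 : 0 ≤ w) (hw1 : w < 1) : binVal (rdigit w) = w := by
  have hs := (binVal_summable (rdigit w)).hasSum.tendsto_sum_nat
  have heq : (fun n => ∑ i ∈ Finset.range n,
      (if rdigit w i then (1:ℝ) else 0) / 2 ^ (i + 1)) = fun n => (⌊2 ^ n * w⌋ : ℝ) / 2 ^ n := by
    funext n; exact rdigit_partial w hw0 hw1 n
  rw [heq] at hs
  have h2 : Filter.Tendsto (fun n : ℕ => (⌊2 ^ n * w⌋ : ℝ) / 2 ^ n) Filter.atTop (nhds w) := by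
    apply tendsto_of_tendsto_of_tendsto_of_le_of_le
      (g := fun n : ℕ => w - (1/2:ℝ)^n) (h := fun _ : ℕ => w)
    · have hz : Filter.Tendsto (fun n : ℕ => (1/2:ℝ)^n) Filter.atTop (nhds 0) :=
        tendsto_pow_atTop_nhds_zero_of_lt_one (by norm_num) (by norm_num)
      have := Filter.Tendsto.sub (tendsto_const_nhds (x := w) (f := Filter.atTop (α := ℕ))) hz
      simpa using this
    · exact tendsto_const_nhds
    · intro n
      have hp : (0:ℝ) < 2 ^ n := by positivity
      rw [sub_le_iff_le_add, div_add' _ _ _ (ne_of_gt hp), le_div_iff₀ hp]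
      have := Int.sub_one_lt_floor ((2:ℝ) ^ n * w)
      have hhalf : (1/2:ℝ)^n * 2^n = 1 := by
        rw [div_pow, one_pow, div_mul_cancel₀]
        positivity
      nlinarith [Int.sub_one_lt_floor ((2:ℝ) ^ n * w)]
    · intro n
      have hp : (0:ℝ) < 2 ^ n := by positivity
      rw [div_le_iff₀ hp]
      have := Int.floor_le ((2:ℝ) ^ n * w)
      linarith
  exact tendsto_nhds_unique hs h2

/-- the m-bit big-endian representation of A -/
def natToBits : ℕ → ℕ → List Bool
  | 0, _ => []
  | (m+1), A => decide (2 ^ m ≤ A) :: natToBits m (A % 2 ^ m)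

lemma natToBits_length (m A : ℕ) : (natToBits m A).length = m := by
  induction m generalizing A with
  | zero => rfl
  | succ m ih => simp [natToBits, ih]

lemma strVal_natToBits {m A : ℕ} (h : A < 2 ^ m) : strVal (natToBits m A) = A := by
  induction m generalizing A with
  | zero => interval_cases A; rfl
  | succ m ih =>
    have hm : 0 < 2 ^ m := Nat.pow_pos (by norm_num)
    have hmod : A % 2 ^ m < 2 ^ m := Nat.mod_lt _ hm
    simp only [natToBits, strVal, natToBits_length, ih hmod]
    rcases le_or_gt (2 ^ m) A with hA | hA
    · rw [decide_eq_true hA]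
      have : A % 2 ^ m = A - 2 ^ m := by
        rw [Nat.mod_eq_sub_mod hA, Nat.mod_eq_of_lt (by rw [pow_succ] at h; omega)]
      rw [pow_succ] at h
      simp [this]; omega
    · rw [decide_eq_false (by omega)]
      simp [Nat.mod_eq_of_lt hA]

/-- the PL interpolation of partition data -/
noncomputable def interp (r : ℕ) (x : ℕ → ℝ) (k : ℕ → ℤ) : ℝ → ℝ :=
  fun t => ∑ i ∈ Finset.range r, (2:ℝ)^(k i) * (max (min t (x (i+1))) (x i) - x i)

section Interp

variable {r : ℕ} {x y : ℕ → ℝ} {k : ℕ → ℤ}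

lemma x_mono (hx : ∀ i < r, x i < x (i+1)) :
    ∀ i j, i ≤ j → j ≤ r → x i ≤ x j := by
  have key : ∀ d i, i + d ≤ r → x i ≤ x (i + d) := by
    intro d
    induction d with
    | zero => intro i _; simp
    | succ d ih =>
      intro i h
      calc x i ≤ x (i + d) := ih i (by omega)
        _ ≤ x (i + d + 1) := le_of_lt (hx _ (by omega))
  intro i j hij hjr
  have : j = i + (j - i) := by omega
  rw [this]
  exact key _ _ (by omega)

lemma interp_piece (hx : ∀ i < r, x i < x (i+1)) (hy0 : y 0 = 0)
    (hslope : ∀ i < r, y (i+1) - y i = 2^(k i) * (x (i+1) - x i))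
    {j : ℕ} (hj : j < r) {t : ℝ} (h1 : x j ≤ t) (h2 : t ≤ x (j+1)) :
    interp r x k t = y j + 2^(k j) * (t - x j) := by
  unfold interp
  rw [Finset.range_eq_Ico, ← Finset.sum_Ico_consecutive _ (show 0 ≤ j+1 by omega)
    (show j+1 ≤ r by omega), ← Finset.range_eq_Ico, Finset.sum_range_succ]
  have hA : ∑ i ∈ Finset.range j, (2:ℝ)^(k i) * (max (min t (x (i+1))) (x i) - x i) = y j := by
    have hc : ∀ i ∈ Finset.range j, (2:ℝ)^(k i) * (max (min t (x (i+1))) (x i) - x i)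
        = y (i+1) - y i := by
      intro i hi
      rw [Finset.mem_range] at hi
      have hle : x (i+1) ≤ t := le_trans (x_mono hx (i+1) j (by omega) (by omega)) h1
      rw [min_eq_right hle, max_eq_left (le_of_lt (hx i (by omega))),
        hslope i (by omega)]
    rw [Finset.sum_congr rfl hc, Finset.sum_range_sub, hy0, sub_zero]
  have hB : (2:ℝ)^(k j) * (max (min t (x (j+1))) (x j) - x j) = 2^(k j) * (t - x j) := by
    rw [min_eq_left h2, max_eq_left h1]
  have hC : ∑ i ∈ Finset.Ico (j+1) r, (2:ℝ)^(k i) * (max (min t (x (i+1))) (x i) - x i) = 0 := by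
    apply Finset.sum_eq_zero
    intro i hi
    rw [Finset.mem_Ico] at hi
    have hge : t ≤ x i := le_trans h2 (x_mono hx (j+1) i (by omega) (by omega))
    have hge2 : t ≤ x (i+1) := le_trans hge (le_of_lt (hx i (by omega)))
    rw [min_eq_left hge2, max_eq_right hge]
    simp
  rw [hA, hB, hC]
  ring

lemma interp_monotone : Monotone (interp r x k) := by
  intro s t hst
  apply Finset.sum_le_sum
  intro i _
  have h2 : (0:ℝ) ≤ 2 ^ (k i) := le_of_lt (zpow_pos (by norm_num) _)
  apply mul_le_mul_of_nonneg_left _ h2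
  apply sub_le_sub_right
  exact max_le_max (min_le_min hst (le_refl _)) (le_refl _)

lemma interp_strictMonoOn (hx : ∀ i < r, x i < x (i+1)) (hy0 : y 0 = 0)
    (hx0 : x 0 = 0) (hxr : x r = 1) (hr : 1 ≤ r)
    (hslope : ∀ i < r, y (i+1) - y i = 2^(k i) * (x (i+1) - x i)) :
    StrictMonoOn (interp r x k) (Set.Icc 0 1) := by
  intro s hs t ht hst
  classical
  set j := Nat.findGreatest (fun j => x j ≤ s) (r - 1) with hjdef
  have hP0 : x 0 ≤ s := by rw [hx0]; exact hs.1
  have hPj : x j ≤ s := by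
    rw [hjdef]
    exact Nat.findGreatest_spec (P := fun j => x j ≤ s) (m := 0) (by omega) hP0
  have hjle : j ≤ r - 1 := Nat.findGreatest_le _
  have hsx : s < x (j+1) := by
    rcases eq_or_lt_of_le hjle with he | hlt
    · have : x (j+1) = 1 := by rw [← hxr]; congr 1; omega
      rw [this]
      exact lt_of_lt_of_le hst ht.2
    · by_contra hcon
      push_neg at hcon
      exact Nat.findGreatest_is_greatest (show j < j+1 by omega) (by omega) hcon
  have hjr : j < r := by omega
  set t' := min t (x (j+1)) with ht'def
  have hst' : s < t' := lt_min hst hsx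
  have h1 : interp r x k s = y j + 2^(k j) * (s - x j) :=
    interp_piece hx hy0 hslope hjr hPj (le_of_lt hsx)
  have h2 : interp r x k t' = y j + 2^(k j) * (t' - x j) :=
    interp_piece hx hy0 hslope hjr (le_trans hPj (le_of_lt hst')) (min_le_right _ _)
  have h3 : interp r x k t' ≤ interp r x k t := interp_monotone (min_le_left _ _)
  have h4 : interp r x k s < interp r x k t' := by
    rw [h1, h2]
    have : (0:ℝ) < 2 ^ (k j) := zpow_pos (by norm_num) _
    nlinarith
  linarith

lemma interp_pl2 (hx : ∀ i < r, x i < x (i+1)) (hx0 : x 0 = 0) (hxr : x r = 1)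
    (hy0 : y 0 = 0) (hyr : y r = 1) (hr : 1 ≤ r)
    (hdy : ∀ i ≤ r, IsDyadic (x i))
    (hslope : ∀ i < r, y (i+1) - y i = 2^(k i) * (x (i+1) - x i)) :
    PL2Fun (interp r x k) := by
  refine ⟨?_, ?_, interp_strictMonoOn hx hy0 hx0 hxr hr hslope, r, fun i => x i, ?_, ?_, ?_, ?_, ?_⟩
  · have h01 : (0:ℝ) ≤ x 1 := by rw [← hx0]; exact le_of_lt (hx 0 (by omega))
    have h00 := interp_piece hx hy0 hslope (show 0 < r by omega) (t := 0) (le_of_eq hx0) h01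
    rw [h00, hy0, hx0]
    ring
  · have he : r - 1 + 1 = r := by omega
    have hle : x (r-1) ≤ 1 := by rw [← hxr]; apply x_mono hx <;> omega
    have hx1 : (1:ℝ) ≤ x (r-1+1) := by rw [he, hxr]
    have h11 := interp_piece hx hy0 hslope (show r-1 < r by omega) (t := 1) hle hx1
    have hs2 := hslope (r-1) (by omega)
    rw [he, hxr, hyr] at hs2
    rw [h11]
    linarith
  · rw [Fin.strictMono_iff_lt_succ]
    intro i
    simp only [Fin.coe_castSucc, Fin.val_succ]
    exact hx i i.isLt
  · simpa using hx0
  · simpa using hxr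
  · intro i
    exact hdy i (by omega)
  · intro i
    refine ⟨k i, y i - 2^(k i) * x i, ?_⟩
    intro t htt
    simp only [Fin.coe_castSucc, Fin.val_succ] at htt
    rw [interp_piece hx hy0 hslope i.isLt htt.1 htt.2]
    ring

end Interp

noncomputable def expLen (e : ℕ) : ℝ := 1 / 2 ^ e

lemma expLen_pos (e : ℕ) : 0 < expLen e := by unfold expLen; positivity

lemma expLen_dyadic (e : ℕ) : IsDyadic (expLen e) := IsDyadic.one_div e

lemma zpow_expLen (e f : ℕ) : (2:ℝ) ^ ((e:ℤ) - (f:ℤ)) * expLen e = expLen f := by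
  unfold expLen
  rw [zpow_sub₀ (by norm_num : (2:ℝ) ≠ 0)]
  have h1 : (2:ℝ) ^ (e:ℤ) = 2 ^ e := zpow_natCast 2 e
  have h2 : (2:ℝ) ^ (f:ℤ) = 2 ^ f := zpow_natCast 2 f
  rw [h1, h2]
  have he : (2:ℝ) ^ e ≠ 0 := by positivity
  have hf : (2:ℝ) ^ f ≠ 0 := by positivity
  field_simp

lemma decomp (p m : ℕ) (hp : 1 ≤ p) :
    ∀ j, ∃ E : List ℕ, E.length = p + j ∧ ((E.map expLen).sum = (p : ℝ) / 2 ^ m) := by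
  intro j
  induction j with
  | zero =>
    refine ⟨List.replicate p m, by simp, ?_⟩
    rw [List.map_replicate, List.sum_replicate, nsmul_eq_mul]
    unfold expLen
    field_simp
  | succ j ih =>
    obtain ⟨E, hlen, hsum⟩ := ih
    match E, hlen with
    | [], hlen => simp at hlen; omega
    | a :: E', hlen =>
      refine ⟨(a+1) :: (a+1) :: E', by simp at hlen ⊢; omega, ?_⟩
      simp only [List.map_cons, List.sum_cons] at hsum ⊢
      have : expLen (a+1) + expLen (a+1) = expLen a := by
        unfold expLen
        rw [pow_succ]
        field_simp
        ring
      linarith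

lemma sum_expLen_dyadic (L : List ℕ) : IsDyadic ((L.map expLen).sum) := by
  induction L with
  | nil => simpa using IsDyadic.zero
  | cons a L ih => simpa using (expLen_dyadic a).add ih

/-- partial sums of the length list -/
noncomputable def psum (P : List ℕ) (i : ℕ) : ℝ := ((P.map expLen).take i).sum

lemma psum_zero (P : List ℕ) : psum P 0 = 0 := by simp [psum]

lemma psum_succ (P : List ℕ) (i : ℕ) (h : i < P.length) :
    psum P (i + 1) = psum P i + expLen (P.getD i 0) := by
  unfold psum
  rw [List.take_succ, List.sum_append]
  congr 1
  have h2 : i < (P.map expLen).length := by simpa using h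
  rw [List.getElem?_eq_getElem h2]
  simp only [Option.toList_some, List.sum_cons, List.sum_nil, add_zero, List.getElem_map]
  rw [List.getD_eq_getElem _ _ h]

lemma psum_dyadic (P : List ℕ) (i : ℕ) : IsDyadic (psum P i) := by
  unfold psum
  rw [← List.map_take]
  exact sum_expLen_dyadic _

lemma psum_length (P : List ℕ) : psum P P.length = (P.map expLen).sum := by
  unfold psum
  rw [List.take_of_length_le (by simp)]

lemma psum_append_left (P Q : List ℕ) : psum (P ++ Q) P.length = (P.map expLen).sum := by
  unfold psum
  rw [List.map_append, List.take_append_of_le_length (by simp), List.take_of_length_le (by simp)]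

lemma key_exists (A M B N : ℕ) (hA1 : 1 ≤ A) (hA2 : A + 1 < 2^M) (hB1 : 1 ≤ B)
    (hB2 : B + 1 < 2^N) {w : ℝ} (hw0 : 0 ≤ w) (hw1 : w ≤ 1) :
    ∃ g : ℝ → ℝ, PL2Fun g ∧ g (((A:ℝ) + w)/2^M) = ((B:ℝ) + w)/2^N := by
  set d1 := 2^M - A - 1 with hd1def
  set d2 := 2^N - B - 1 with hd2def
  have hd1 : 1 ≤ d1 := by omega
  have hd2 : 1 ≤ d2 := by omega
  set r1 := max A B with hr1def
  set r2 := max d1 d2 with hr2def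
  obtain ⟨E1, hE1len, hE1sum⟩ := decomp A M hA1 (r1 - A)
  obtain ⟨F1, hF1len, hF1sum⟩ := decomp B N hB1 (r1 - B)
  obtain ⟨E2, hE2len, hE2sum⟩ := decomp d1 M hd1 (r2 - d1)
  obtain ⟨F2, hF2len, hF2sum⟩ := decomp d2 N hd2 (r2 - d2)
  have hE1l : E1.length = r1 := by omega
  have hF1l : F1.length = r1 := by omega
  have hE2l : E2.length = r2 := by omega
  have hF2l : F2.length = r2 := by omega
  set Ed := E1 ++ M :: E2 with hEddef
  set Fd := F1 ++ N :: F2 with hFddef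
  set r := r1 + 1 + r2 with hrdef
  have hEdlen : Ed.length = r := by simp [hEddef, hE1l, hE2l, hrdef]; omega
  have hFdlen : Fd.length = r := by simp [hFddef, hF1l, hF2l, hrdef]; omega
  set x := psum Ed with hxdef
  set y := psum Fd with hydef
  set k := fun i => ((Ed.getD i 0 : ℤ) - (Fd.getD i 0 : ℤ)) with hkdef
  have hr : 1 ≤ r := by omega
  have hx : ∀ i < r, x i < x (i+1) := by
    intro i hi
    rw [hxdef, psum_succ Ed i (by omega)]
    have := expLen_pos (Ed.getD i 0)
    linarith
  have hslope : ∀ i < r, y (i+1) - y i = 2^(k i) * (x (i+1) - x i) := by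
    intro i hi
    rw [hxdef, hydef, psum_succ Ed i (by omega), psum_succ Fd i (by omega), hkdef]
    simp only [add_sub_cancel_left]
    rw [zpow_expLen]
  have hcst1 : ((d1:ℝ)) = 2^M - A - 1 := by
    rw [hd1def]
    push_cast [Nat.sub_sub]
    rw [Nat.cast_sub (by omega)]
    push_cast
    ring
  have hcst2 : ((d2:ℝ)) = 2^N - B - 1 := by
    rw [hd2def]
    push_cast [Nat.sub_sub]
    rw [Nat.cast_sub (by omega)]
    push_cast
    ring
  have hxr : x r = 1 := by
    rw [hxdef, ← hEdlen, psum_length, hEddef]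
    rw [List.map_append, List.sum_append, List.map_cons, List.sum_cons, hE1sum, hE2sum]
    rw [hcst1]
    unfold expLen
    have : (0:ℝ) < 2^M := by positivity
    field_simp
    ring
  have hyr : y r = 1 := by
    rw [hydef, ← hFdlen, psum_length, hFddef]
    rw [List.map_append, List.sum_append, List.map_cons, List.sum_cons, hF1sum, hF2sum]
    rw [hcst2]
    unfold expLen
    have : (0:ℝ) < 2^N := by positivity
    field_simp
    ring
  have hx0 : x 0 = 0 := psum_zero Ed
  have hy0 : y 0 = 0 := psum_zero Fd
  have hdy : ∀ i ≤ r, IsDyadic (x i) := fun i _ => psum_dyadic Ed i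
  refine ⟨interp r x k, interp_pl2 hx hx0 hxr hy0 hyr hr hdy hslope, ?_⟩
  -- evaluation
  have hxr1 : x r1 = (A:ℝ)/2^M := by
    rw [hxdef, hEddef, ← hE1l, psum_append_left, hE1sum]
  have hyr1 : y r1 = (B:ℝ)/2^N := by
    rw [hydef, hFddef, ← hF1l, psum_append_left, hF1sum]
  have hEdr1 : Ed.getD r1 0 = M := by
    rw [hEddef, List.getD_append_right _ _ _ _ (by omega : E1.length ≤ r1), hE1l]
    simp
  have hFdr1 : Fd.getD r1 0 = N := by
    rw [hFddef, List.getD_append_right _ _ _ _ (by omega : F1.length ≤ r1), hF1l]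
    simp
  have hxs : x (r1+1) = x r1 + expLen M := by
    rw [hxdef, psum_succ Ed r1 (by omega), hEdr1]
  have hM : (0:ℝ) < 2^M := by positivity
  have hN : (0:ℝ) < 2^N := by positivity
  have ht1 : x r1 ≤ ((A:ℝ) + w)/2^M := by
    rw [hxr1]
    gcongr
    linarith

  have ht2 : ((A:ℝ) + w)/2^M ≤ x (r1+1) := by
    rw [hxs, hxr1]
    unfold expLen
    rw [← add_div]
    gcongr
  have heval := interp_piece hx hy0 hslope (show r1 < r by omega) ht1 ht2
  rw [heval, hxr1, hyr1]
  have hk : (2:ℝ)^(k r1) * expLen M = expLen N := by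
    rw [hkdef]
    simp only [hEdr1, hFdr1]
    exact zpow_expLen M N
  have hsub : ((A:ℝ) + w)/2^M - (A:ℝ)/2^M = w * expLen M := by
    unfold expLen
    field_simp
    ring
  rw [hsub, ← mul_assoc, mul_comm ((2:ℝ)^(k r1)) w, mul_assoc, hk]
  unfold expLen
  field_simp

lemma binVal_of_all_true {f : ℕ → Bool} (h : ∀ i, f i = true) : binVal f = 1 := by
  have : f = fun _ => true := funext h
  rw [this, binVal_const_true]

lemma binVal_of_all_false {f : ℕ → Bool} (h : ∀ i, f i = false) : binVal f = 0 := by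
  have : f = fun _ => false := funext h
  rw [this, binVal_const_false]

lemma prepend_shift (μ : List Bool) (ω : ℕ → Bool) (k : ℕ) :
    prependStr μ ω = prependStr (μ ++ List.ofFn (fun i : Fin k => ω i)) (fun i => ω (i + k)) := by
  rw [prependStr_append, prependStr_ofFn_shift]

lemma extend_prefix {t u : ℝ} (ht : t ∈ Set.Ioo (0:ℝ) 1) (hu : u ∈ Set.Ioo (0:ℝ) 1)
    (μ ν : List Bool) (ω : ℕ → Bool)
    (htv : t = binVal (prependStr μ ω)) (huv : u = binVal (prependStr ν ω)) :
    ∃ (μ' ν' : List Bool) (σ : ℕ → Bool),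
      t = binVal (prependStr μ' σ) ∧ u = binVal (prependStr ν' σ) ∧
      true ∈ μ' ∧ false ∈ μ' ∧ true ∈ ν' ∧ false ∈ ν' := by
  have hmemtrue : ∀ (L : List Bool) (f : ℕ → Bool), (∀ i, f i = true) →
      binVal (prependStr L f) < 1 → false ∈ L := by
    intro L f hf hlt
    by_contra hfm
    have hall : ∀ i, prependStr L f i = true := by
      intro i
      unfold prependStr
      split
      · next h =>
        rcases Bool.dichotomy (L.get ⟨i, h⟩) with hb | hb
        · exact absurd (hb ▸ List.get_mem L ⟨i, h⟩) hfm
        · exact hb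
      · exact hf _
    rw [binVal_of_all_true hall] at hlt
    exact lt_irrefl _ hlt
  have hmemfalse : ∀ (L : List Bool) (f : ℕ → Bool), (∀ i, f i = false) →
      0 < binVal (prependStr L f) → true ∈ L := by
    intro L f hf hlt
    by_contra hfm
    have hall : ∀ i, prependStr L f i = false := by
      intro i
      unfold prependStr
      split
      · next h =>
        rcases Bool.dichotomy (L.get ⟨i, h⟩) with hb | hb
        · exact hb
        · exact absurd (hb ▸ List.get_mem L ⟨i, h⟩) hfm
      · exact hf _
    rw [binVal_of_all_false hall] at hlt
    exact lt_irrefl _ hlt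
  by_cases hall1 : ∀ i, ω i = true
  · refine ⟨μ ++ List.ofFn (fun i : Fin 1 => ω i), ν ++ List.ofFn (fun i : Fin 1 => ω i),
      fun i => ω (i + 1), ?_, ?_, ?_, ?_, ?_, ?_⟩
    · rw [htv, prepend_shift μ ω 1]
    · rw [huv, prepend_shift ν ω 1]
    · apply List.mem_append_right
      simp [hall1 0]
    · apply List.mem_append_left
      exact hmemtrue μ ω hall1 (htv ▸ ht.2)
    · apply List.mem_append_right
      simp [hall1 0]
    · apply List.mem_append_left
      exact hmemtrue ν ω hall1 (huv ▸ hu.2)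
  · by_cases hall0 : ∀ i, ω i = false
    · refine ⟨μ ++ List.ofFn (fun i : Fin 1 => ω i), ν ++ List.ofFn (fun i : Fin 1 => ω i),
        fun i => ω (i + 1), ?_, ?_, ?_, ?_, ?_, ?_⟩
      · rw [htv, prepend_shift μ ω 1]
      · rw [huv, prepend_shift ν ω 1]
      · apply List.mem_append_left
        exact hmemfalse μ ω hall0 (htv ▸ ht.1)
      · apply List.mem_append_right
        simp [hall0 0]
      · apply List.mem_append_left
        exact hmemfalse ν ω hall0 (huv ▸ hu.1)
      · apply List.mem_append_right
        simp [hall0 0]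
    · push_neg at hall1 hall0
      obtain ⟨i1, hi1⟩ := hall1
      obtain ⟨i0, hi0⟩ := hall0
      have hi1' : ω i1 = false := by
        rcases Bool.dichotomy (ω i1) with h | h
        · exact h
        · exact absurd h hi1
      have hi0' : ω i0 = true := by
        rcases Bool.dichotomy (ω i0) with h | h
        · exact absurd h hi0
        · exact h
      set kk := max i0 i1 + 1 with hkk
      have hmem1 : true ∈ List.ofFn (fun i : Fin kk => ω i) := by
        rw [List.mem_ofFn]
        exact ⟨⟨i0, by omega⟩, hi0'⟩
      have hmem0 : false ∈ List.ofFn (fun i : Fin kk => ω i) := by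
        rw [List.mem_ofFn]
        exact ⟨⟨i1, by omega⟩, hi1'⟩
      refine ⟨μ ++ List.ofFn (fun i : Fin kk => ω i), ν ++ List.ofFn (fun i : Fin kk => ω i),
        fun i => ω (i + kk), ?_, ?_, ?_, ?_, ?_, ?_⟩
      · rw [htv, prepend_shift μ ω kk]
      · rw [huv, prepend_shift ν ω kk]
      · exact List.mem_append_right _ hmem1
      · exact List.mem_append_right _ hmem0
      · exact List.mem_append_right _ hmem1
      · exact List.mem_append_right _ hmem0

lemma pl2_affine_at {g : ℝ → ℝ} (hg : PL2Fun g) {t : ℝ} (ht0 : 0 ≤ t) (ht1 : t ≤ 1) :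
    ∃ (k : ℤ) (c : ℝ), IsDyadic c ∧ g t = 2^k * t + c := by
  classical
  obtain ⟨hg0, hg1, _hmono, n, x, hxm, hx0, hxl, hdy, hp⟩ := hg
  have hn : 1 ≤ n := by
    by_contra hc
    have hn0 : n = 0 := by omega
    subst hn0
    have : (0 : Fin 1) = Fin.last 0 := rfl
    rw [← this, hx0] at hxl
    norm_num at hxl
  have himg : ∀ j : Fin (n+1), IsDyadic (g (x j)) := by
    intro j
    induction j using Fin.induction with
    | zero =>
      rw [hx0, hg0]
      exact IsDyadic.zero
    | succ i ih =>
      obtain ⟨k, c, hk⟩ := hp i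
      have hle : x i.castSucc ≤ x i.succ := le_of_lt (hxm (Fin.castSucc_lt_succ (i := i)))
      have e1 := hk (x i.castSucc) ⟨le_refl _, hle⟩
      have e2 := hk (x i.succ) ⟨hle, le_refl _⟩
      have heq : g (x i.succ) = g (x i.castSucc) + 2^k * (x i.succ - x i.castSucc) := by
        rw [e1, e2]; ring
      rw [heq]
      exact ih.add (IsDyadic.zpow_mul k ((hdy _).sub (hdy _)))
  -- find the piece containing t
  set S := Finset.univ.filter (fun j : Fin (n+1) => x j ≤ t) with hSdef
  have hS : S.Nonempty := ⟨0, by simp [hSdef, hx0, ht0]⟩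
  set j := S.max' hS with hjdef
  have hj1 : x j ≤ t := by
    have := S.max'_mem hS
    exact (Finset.mem_filter.mp this).2
  obtain ⟨i, hi1, hi2⟩ : ∃ i : Fin n, x i.castSucc ≤ t ∧ t ≤ x i.succ := by
    by_cases hjl : (j : ℕ) < n
    · refine ⟨⟨j, hjl⟩, ?_, ?_⟩
      · have : (⟨j, hjl⟩ : Fin n).castSucc = j := by
          ext; simp
        rw [this]; exact hj1
      · by_contra hc
        push_neg at hc
        have hmem : (⟨j, hjl⟩ : Fin n).succ ∈ S :=
          Finset.mem_filter.mpr ⟨Finset.mem_univ _, le_of_lt hc⟩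
        have hle := S.le_max' _ hmem
        rw [← hjdef] at hle
        have : (j:ℕ) + 1 ≤ (j:ℕ) := by
          have h2 : ((⟨j, hjl⟩ : Fin n).succ : ℕ) = (j:ℕ) + 1 := rfl
          calc (j:ℕ) + 1 = ((⟨j, hjl⟩ : Fin n).succ : ℕ) := h2.symm
            _ ≤ (j:ℕ) := hle
        omega
    · -- j = last, so t = 1
      have hjn : (j : ℕ) = n := by omega
      have hxj : x j = 1 := by
        rw [← hxl]; congr 1; ext; simp [hjn]
      have ht : t = 1 := le_antisymm ht1 (hxj ▸ hj1)
      refine ⟨⟨n-1, by omega⟩, ?_, ?_⟩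
      · refine le_of_le_of_eq ?_ ht.symm
        have : (⟨n-1, by omega⟩ : Fin n).castSucc ≤ Fin.last n := Fin.le_last _
        calc x (⟨n-1, by omega⟩ : Fin n).castSucc ≤ x (Fin.last n) :=
              hxm.monotone this
          _ = 1 := hxl
      · have : (⟨n-1, by omega⟩ : Fin n).succ = Fin.last n := by
          ext; simp; omega
        rw [this, hxl, ht]
  obtain ⟨k, c, hk⟩ := hp i
  refine ⟨k, c, ?_, hk t ⟨hi1, hi2⟩⟩
  have e1 := hk (x i.castSucc) ⟨le_refl _, le_trans hi1 hi2⟩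
  have hc : c = g (x i.castSucc) - 2^k * x i.castSucc := by rw [e1]; ring
  rw [hc]
  exact (himg _).sub (IsDyadic.zpow_mul k (hdy _))

theorem stmt1 (t u : ℝ) (ht : t ∈ Set.Ioo (0 : ℝ) 1) (hu : u ∈ Set.Ioo (0 : ℝ) 1) :
    (∃ g : ℝ → ℝ, PL2Fun g ∧ g t = u) ↔
      ∃ (μ ν : List Bool) (ω : ℕ → Bool),
        t = binVal (prependStr μ ω) ∧ u = binVal (prependStr ν ω) := by
  constructor
  · rintro ⟨g, hg, hgt⟩
    obtain ⟨k, c, hcdy, haff⟩ := pl2_affine_at hg (le_of_lt ht.1) (le_of_lt ht.2)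
    obtain ⟨a, b, rfl⟩ := hcdy
    have hu_eq : u = 2^k * t + (a:ℝ)/2^b := by rw [← hgt, haff]
    set m : ℕ := k.toNat + b + 1 with hmdef
    have hkm : k ≤ m := by
      have := Int.self_le_toNat k
      omega
    set N : ℕ := ((m : ℤ) - k).toNat with hNdef
    have hNcast : (N : ℤ) = (m : ℤ) - k := by
      rw [hNdef, Int.toNat_of_nonneg (by omega)]
    have hbN : b ≤ N := by
      have h1 : (k.toNat : ℤ) ≥ k := Int.self_le_toNat k
      omega
    have hN1 : 1 ≤ N := by
      have h1 : (k.toNat : ℤ) ≥ k := Int.self_le_toNat k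
      omega
    have hm1 : 1 ≤ m := by omega
    -- key identity
    have hpow : (2:ℝ)^N * 2^k = 2^m := by
      have h1 : (2:ℝ)^N = (2:ℝ)^(N:ℤ) := (zpow_natCast 2 N).symm
      have h2 : (2:ℝ)^m = (2:ℝ)^(m:ℤ) := (zpow_natCast 2 m).symm
      rw [h1, h2, ← zpow_add₀ (by norm_num : (2:ℝ) ≠ 0)]
      congr 1
      omega
    have hpowb : (2:ℝ)^N / 2^b = 2^(N-b) := by
      have : (2:ℝ)^N = 2^(N-b) * 2^b := by
        rw [← pow_add]
        congr 1
        omega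
      rw [this]
      field_simp
    have hkey : (2:ℝ)^N * u = 2^m * t + ((a * 2^(N-b) : ℤ) : ℝ) := by
      rw [hu_eq]
      push_cast
      rw [mul_add, ← mul_assoc, hpow]
      congr 1
      rw [mul_div_assoc', mul_comm ((2:ℝ)^N) (a:ℝ), mul_div_assoc, hpowb]
    set A : ℤ := ⌊(2:ℝ)^m * t⌋ with hAdef
    set w : ℝ := Int.fract ((2:ℝ)^m * t) with hwdef
    have hw0 : 0 ≤ w := Int.fract_nonneg _
    have hw1 : w < 1 := Int.fract_lt_one _
    have hA0 : 0 ≤ A :=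
      Int.floor_nonneg.mpr (mul_nonneg (by positivity) (le_of_lt ht.1))
    have hAlt : A < 2^m := by
      rw [hAdef]
      have : (2:ℝ)^m * t < 2^m := by
        have h2 : (0:ℝ) < 2^m := by positivity
        nlinarith [ht.2]
      apply Int.floor_lt.mpr
      push_cast
      exact this
    have hAw : (A:ℝ) + w = 2^m * t := by
      rw [hAdef, hwdef, Int.fract]
      ring
    set B : ℤ := A + a * 2^(N-b) with hBdef
    have hBw : (B:ℝ) + w = 2^N * u := by
      rw [hkey, hBdef]
      push_cast
      push_cast at hAw
      linarith
    have hB0 : 0 ≤ B := by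
      have h2 : (0:ℝ) < 2^N := by positivity
      have h3 : (0:ℝ) ≤ 2^N * u := by nlinarith [hu.1]
      have h4 : (0:ℝ) ≤ (B:ℝ) + w := by linarith
      by_contra hc
      push_neg at hc
      have h5' : B ≤ -1 := by omega
      have h5 : (B:ℝ) ≤ -1 := by exact_mod_cast h5'
      linarith
    have hBlt : B < 2^N := by
      have h2 : (0:ℝ) < 2^N := by positivity
      have hlt : (2:ℝ)^N * u < 2^N := by nlinarith [hu.2]
      have : (B:ℝ) + w < 2^N := by linarith
      by_contra hc
      push_neg at hc
      have : ((2:ℤ)^N : ℝ) ≤ (B:ℝ) := by exact_mod_cast hc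
      push_cast at this
      linarith
    refine ⟨natToBits m A.toNat, natToBits N B.toNat, rdigit w, ?_, ?_⟩
    · rw [binVal_prependStr, natToBits_length, strVal_natToBits, binVal_rdigit hw0 hw1]
      · have hcast : ((A.toNat : ℕ) : ℝ) = (A:ℝ) := by
          exact_mod_cast congrArg (Int.cast : ℤ → ℝ) (Int.toNat_of_nonneg hA0)
        rw [hcast, hAw]
        have h2 : (0:ℝ) < 2^m := by positivity
        field_simp
      · have : ((2:ℤ)^m) = ((2^m : ℕ) : ℤ) := by push_cast; ring
        omega
    · rw [binVal_prependStr, natToBits_length, strVal_natToBits, binVal_rdigit hw0 hw1]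
      · have hcast : ((B.toNat : ℕ) : ℝ) = (B:ℝ) := by
          exact_mod_cast congrArg (Int.cast : ℤ → ℝ) (Int.toNat_of_nonneg hB0)
        rw [hcast, hBw]
        have h2 : (0:ℝ) < 2^N := by positivity
        field_simp
      · have : ((2:ℤ)^N) = ((2^N : ℕ) : ℤ) := by push_cast; ring
        omega
  · rintro ⟨μ, ν, ω, htv, huv⟩
    obtain ⟨μ', ν', σ, htv', huv', hμt, hμf, hνt, hνf⟩ :=
      extend_prefix ht hu μ ν ω htv huv
    have hA1 : 1 ≤ strVal μ' := strVal_pos hμt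
    have hA2 : strVal μ' + 1 < 2 ^ μ'.length := by
      have := strVal_upper hμf
      omega
    have hB1 : 1 ≤ strVal ν' := strVal_pos hνt
    have hB2 : strVal ν' + 1 < 2 ^ ν'.length := by
      have := strVal_upper hνf
      omega
    obtain ⟨g, hgpl, hgval⟩ := key_exists (strVal μ') (μ'.length) (strVal ν') (ν'.length)
      hA1 hA2 hB1 hB2 (binVal_nonneg σ) (binVal_le_one σ)
    refine ⟨g, hgpl, ?_⟩
    rw [htv', huv', binVal_prependStr, binVal_prependStr]
    exact hgval
end

section
/- Let G be a group of permutations of a set X, and let g₁, g₂ ∈ G each have order at least three. If X₁ and X₂ are disjoint nonempty subsets of X such that for all integers n ≠ 0 and all i ≠ j, g_iⁿ(X_j) ⊆ X_i, then g₁ and g₂ generate a free group of rank 2. -/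
open Pointwise


/-- **Ping-Pong Lemma.** If `g₁, g₂` are permutations of a set `X`, each of order at
least three, and `X₁, X₂` are disjoint nonempty subsets such that `g₁ⁿ(X₂) ⊆ X₁` and
`g₂ⁿ(X₁) ⊆ X₂` for every nonzero integer `n`, then `g₁` and `g₂` freely generate a
free group of rank two. -/
theorem stmt3 {X : Type*} (g₁ g₂ : Equiv.Perm X)
    (h₁ : g₁ ≠ 1 ∧ g₁ ^ 2 ≠ 1) (h₂ : g₂ ≠ 1 ∧ g₂ ^ 2 ≠ 1)
    (X₁ X₂ : Set X) (hne₁ : X₁.Nonempty) (hne₂ : X₂.Nonempty)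
    (hdisj : Disjoint X₁ X₂)
    (hp₁ : ∀ n : ℤ, n ≠ 0 → ∀ x ∈ X₂, (g₁ ^ n) x ∈ X₁)
    (hp₂ : ∀ n : ℤ, n ≠ 0 → ∀ x ∈ X₁, (g₂ ^ n) x ∈ X₂) :
    Function.Injective ⇑(FreeGroup.lift ![g₁, g₂]) := by
  classical
  set a : Fin 2 → Equiv.Perm X := ![g₁, g₂] with ha
  have key : FreeGroup.lift a =
      (Monoid.CoprodI.lift fun i : Fin 2 => FreeGroup.lift fun _ : Unit => a i).comp
        (@freeGroupEquivCoprodI (Fin 2)).toMonoidHom := by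
    ext i
    simp
  rw [key, MonoidHom.coe_comp]
  refine Function.Injective.comp ?_ (MulEquiv.injective freeGroupEquivCoprodI)
  let H : Fin 2 → Type _ := fun _ => FreeGroup Unit
  let f : ∀ i, H i →* Equiv.Perm X := fun i => FreeGroup.lift fun _ : Unit => a i
  let X' : Fin 2 → Set X := ![X₁, X₂]
  have hcard : 3 ≤ Cardinal.mk (Fin 2) ∨ ∃ i, 3 ≤ Cardinal.mk (H i) := by
    right
    refine ⟨0, ?_⟩
    rw [Cardinal.mk_congr FreeGroup.freeGroupUnitEquivInt]
    exact le_trans (Cardinal.nat_lt_aleph0 3).le (Cardinal.aleph0_le_mk ℤ)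
  apply Monoid.CoprodI.lift_injective_of_ping_pong f hcard X'
  · intro i
    fin_cases i
    · exact hne₁
    · exact hne₂
  · intro i j hij
    fin_cases i <;> fin_cases j <;>
      simp only [Function.onFun, X', Matrix.cons_val_zero, Matrix.cons_val_one, Matrix.head_cons]
    · exact absurd rfl hij
    · exact hdisj
    · exact hdisj.symm
    · exact absurd rfl hij
  · intro i j hij
    refine FreeGroup.freeGroupUnitEquivInt.forall_congr_left.mpr ?_
    intro n hne1
    have hnne0 : n ≠ 0 := by
      rintro rfl
      apply hne1
      simp [FreeGroup.freeGroupUnitEquivInt]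
    change FreeGroup.lift (fun _ : Unit => a i) (FreeGroup.of () ^ n) • X' j ⊆ X' i
    simp only [map_zpow, FreeGroup.lift_apply_of]
    rintro _ ⟨x, hx, rfl⟩
    fin_cases i <;> fin_cases j <;> simp_all [X', Equiv.Perm.smul_def, a] <;>
      first
        | exact hp₁ n hnne0 x hx
        | exact hp₂ n hnne0 x hx
end

section
/- Let f, g be orientation-preserving homeomorphisms of the circle S¹, each with nonempty fixed point set. If Fix(f) ∩ Fix(g) = ∅, then the group ⟨f, g⟩ contains a non-abelian free subgroup. -/
/-- The circle `S¹ = ℝ/ℤ`. -/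
abbrev S1 := AddCircle (1 : ℝ)

/-- `F : ℝ → ℝ` is a lift of `f` through the covering `ℝ → ℝ/ℤ`, witnessing that `f`
is an orientation-preserving homeomorphism of the circle. -/
def IsLiftOf (f : Equiv.Perm S1) (F : ℝ → ℝ) : Prop :=
  StrictMono F ∧ Continuous F ∧ (∀ x : ℝ, F (x + 1) = F x + 1) ∧
    ∀ x : ℝ, f ((x : ℝ) : S1) = ((F x : ℝ) : S1)

/-- `f` is an orientation-preserving homeomorphism of the circle. -/
def IsPosHomeo (f : Equiv.Perm S1) : Prop := ∃ F, IsLiftOf f F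

/-- `ρ` is the translation number of the lift `F`. -/
def HasRotLim (F : ℝ → ℝ) (ρ : ℝ) : Prop :=
  Filter.Tendsto (fun n : ℕ => F^[n] 0 / n) Filter.atTop (nhds ρ)

/-- `G` contains a non-abelian free subgroup (one isomorphic to the free group of rank 2). -/
def HasFreeSubgroup (G : Subgroup (Equiv.Perm S1)) : Prop :=
  ∃ φ : FreeGroup (Fin 2) →* Equiv.Perm S1, Function.Injective φ ∧ ∀ w, φ w ∈ G

open Set Filter Topology Metric Pointwise

instance : Fact ((0:ℝ) < 1) := ⟨one_pos⟩

/-! ### Real-line dynamics -/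

lemma pingpong_helper {F : ℝ → ℝ} (hm : StrictMono F) (hc : Continuous F)
    {α β : ℝ} (hfβ : F β = β)
    (hincr : ∀ y ∈ Ioo α β, y < F y)
    {W : Set ℝ} (hW : IsOpen W) (hβW : β ∈ W)
    {x : ℝ} (hx : x ∈ Ioo α β) :
    ∃ N : Set ℝ, IsOpen N ∧ x ∈ N ∧ ∃ m : ℕ, ∀ y ∈ N, ∀ n ≥ m, F^[n] y ∈ W := by
  have hαβ : α < β := hx.1.trans hx.2
  have hmap : ∀ y ∈ Ioo α β, F y ∈ Ioo α β := fun y hy =>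
    ⟨hy.1.trans (hincr y hy), hfβ ▸ hm hy.2⟩
  obtain ⟨ε, hε, hball⟩ := Metric.isOpen_iff.mp hW β hβW
  set c : ℝ := max α (β - ε) with hcdef
  have hcβ : c < β := max_lt hαβ (by linarith)
  have hcW : Ioo c β ⊆ W := by
    intro y hy
    apply hball
    rw [Metric.mem_ball, Real.dist_eq, abs_lt]
    have : β - ε < y := lt_of_le_of_lt (le_max_right _ _) hy.1
    constructor <;> linarith [hy.2]
  set x' : ℝ := (α + x) / 2 with hx'def
  have hx'1 : α < x' := by simp only [hx'def]; linarith [hx.1]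
  have hx'2 : x' < x := by simp only [hx'def]; linarith [hx.1]
  have hx'm : x' ∈ Ioo α β := ⟨hx'1, hx'2.trans hx.2⟩
  set u : ℕ → ℝ := fun n => F^[n] x' with hudef
  have humem : ∀ n, u n ∈ Ioo α β := by
    intro n
    induction n with
    | zero => simpa [hudef] using hx'm
    | succ n ih =>
      have : u (n + 1) = F (u n) := by
        simp only [hudef, Function.iterate_succ_apply']
      rw [this]; exact hmap _ ih
  have humono : Monotone u := by
    apply monotone_nat_of_le_succ
    intro n
    have : u (n + 1) = F (u n) := by
      simp only [hudef, Function.iterate_succ_apply']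
    rw [this]
    exact (hincr _ (humem n)).le
  have hbdd : BddAbove (range u) := ⟨β, by rintro _ ⟨n, rfl⟩; exact (humem n).2.le⟩
  set l : ℝ := ⨆ n, u n with hldef
  have hul : Tendsto u atTop (𝓝 l) := tendsto_atTop_ciSup humono hbdd
  have hlβ : l ≤ β := ciSup_le fun n => (humem n).2.le
  have hlα : α < l := lt_of_lt_of_le hx'1 (le_ciSup hbdd 0)
  have hFl : F l = l := by
    have h1 : Tendsto (fun n => F (u n)) atTop (𝓝 (F l)) := (hc.tendsto l).comp hul
    have h2 : Tendsto (fun n => u (n + 1)) atTop (𝓝 l) := hul.comp (tendsto_add_atTop_nat 1)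
    have heq : (fun n => F (u n)) = fun n => u (n + 1) := by
      funext n; simp only [hudef, Function.iterate_succ_apply']
    rw [heq] at h1
    exact tendsto_nhds_unique h1 h2
  have hlb : l = β := by
    rcases eq_or_lt_of_le hlβ with h | h
    · exact h
    · exact absurd hFl (ne_of_gt (hincr l ⟨hlα, h⟩))
  obtain ⟨m, hmc⟩ : ∃ m, c < u m := by
    have : ∀ᶠ n in atTop, u n ∈ Ioi c := hul.eventually (by rw [hlb]; exact Ioi_mem_nhds hcβ)
    exact this.exists
  refine ⟨Ioo x' β, isOpen_Ioo, ⟨hx'2, hx.2⟩, m, ?_⟩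
  intro y hy n hn
  apply hcW
  constructor
  · calc c < u m := hmc
      _ ≤ u n := humono hn
      _ < F^[n] y := (hm.iterate n) hy.1
  · calc F^[n] y < F^[n] β := (hm.iterate n) hy.2
      _ = β := Function.iterate_fixed hfβ n

lemma pingpong_local {F : ℝ → ℝ} (hm : StrictMono F) (hc : Continuous F)
    {α β x : ℝ} (hFα : F α = α) (hFβ : F β = β)
    (hx : x ∈ Ioo α β) (hnofix : ∀ y ∈ Ioo α β, F y ≠ y)
    {W : Set ℝ} (hW : IsOpen W) (hαW : α ∈ W) (hβW : β ∈ W) :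
    ∃ N : Set ℝ, IsOpen N ∧ x ∈ N ∧ ∃ m : ℕ, ∀ y ∈ N, ∀ n ≥ m, F^[n] y ∈ W := by
  have claim : ∀ y₁ ∈ Ioo α β, ∀ y₂ ∈ Ioo α β, F y₁ < y₁ → y₂ < F y₂ → False := by
    intro y₁ hy₁ y₂ hy₂ h1 h2
    have hcont : ∀ s : Set ℝ, ContinuousOn (fun z => F z - z) s :=
      fun s => (hc.sub continuous_id).continuousOn
    rcases le_total y₁ y₂ with h | h
    · obtain ⟨z, hz, hz0⟩ := intermediate_value_Icc h (hcont _)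
        (show (0:ℝ) ∈ Icc (F y₁ - y₁) (F y₂ - y₂) by constructor <;> simp <;> linarith)
      have hz0' : F z - z = 0 := hz0
      exact hnofix z ⟨hy₁.1.trans_le hz.1, hz.2.trans_lt hy₂.2⟩ (by linarith)
    · obtain ⟨z, hz, hz0⟩ := intermediate_value_Icc' h (hcont _)
        (show (0:ℝ) ∈ Icc (F y₁ - y₁) (F y₂ - y₂) by constructor <;> simp <;> linarith)
      have hz0' : F z - z = 0 := hz0
      exact hnofix z ⟨hy₂.1.trans_le hz.1, hz.2.trans_lt hy₁.2⟩ (by linarith)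
  rcases lt_or_gt_of_ne (hnofix x hx) with hneg | hpos
  · -- decreasing case: conjugate by negation
    have hm' : StrictMono (fun y : ℝ => -F (-y)) := fun y z hyz => by
      simp only [neg_lt_neg_iff]
      exact hm (neg_lt_neg hyz)
    have hc' : Continuous (fun y : ℝ => -F (-y)) := (hc.comp continuous_neg).neg
    have hfix' : (fun y : ℝ => -F (-y)) (-α) = -α := by simp [hFα]
    have hincr' : ∀ y ∈ Ioo (-β) (-α), y < (fun y : ℝ => -F (-y)) y := by
      intro y hy
      have hymem : -y ∈ Ioo α β := ⟨by linarith [hy.2], by linarith [hy.1]⟩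
      have hlt : F (-y) < -y := by
        by_contra hle
        have : -y < F (-y) := lt_of_le_of_ne (not_lt.mp hle) (Ne.symm (hnofix _ hymem))
        exact claim x hx (-y) hymem hneg this
      simp only
      linarith
    have hW' : IsOpen ((fun y : ℝ => -y) ⁻¹' W) := hW.preimage continuous_neg
    have hαW' : -α ∈ (fun y : ℝ => -y) ⁻¹' W := by
      simp only [mem_preimage, neg_neg]; exact hαW
    obtain ⟨N', hN'o, hN'x, m, hN'⟩ := pingpong_helper hm' hc' hfix' hincr' hW' hαW'
      (x := -x) ⟨neg_lt_neg hx.2, neg_lt_neg hx.1⟩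
    have hsc : Function.Semiconj (fun y : ℝ => -y) F (fun y : ℝ => -F (-y)) := by
      intro z; simp
    refine ⟨(fun y : ℝ => -y) ⁻¹' N', hN'o.preimage continuous_neg, hN'x, m, ?_⟩
    intro y hy n hn
    have h := hN' (-y) hy n hn
    rw [← (hsc.iterate_right n).eq y] at h
    simpa using h
  · -- increasing case
    have hincr : ∀ y ∈ Ioo α β, y < F y := by
      intro y hy
      by_contra hle
      have : F y < y := lt_of_le_of_ne (not_lt.mp hle) (hnofix _ hy)
      exact claim y hy x hx this hpos
    exact pingpong_helper hm hc hFβ hincr hW hβW hx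

lemma pingpong_realDyn {F : ℝ → ℝ} (hm : StrictMono F) (hc : Continuous F)
    {a b : ℝ} (ha : F a = a) (hb : F b = b)
    {K : Set ℝ} (hK : IsCompact K) (hKJ : K ⊆ Icc a b) (hKfix : ∀ x ∈ K, F x ≠ x)
    {W : Set ℝ} (hW : IsOpen W) (hWfix : ∀ x ∈ Icc a b, F x = x → x ∈ W) :
    ∃ L : ℕ, ∀ n ≥ L, ∀ x ∈ K, F^[n] x ∈ W := by
  have key : ∀ x ∈ K, ∃ N : Set ℝ, IsOpen N ∧ x ∈ N ∧
      ∃ m : ℕ, ∀ y ∈ N, ∀ n ≥ m, F^[n] y ∈ W := by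
    intro x hxK
    have hxJ := hKJ hxK
    have hxne := hKfix x hxK
    have hax : a < x := lt_of_le_of_ne hxJ.1 (fun h => hxne (h ▸ ha))
    have hxb : x < b := lt_of_le_of_ne hxJ.2 (fun h => hxne (h.symm ▸ hb))
    have hFixClosed : IsClosed {y : ℝ | F y = y} := isClosed_eq hc continuous_id
    have hSne : ({y : ℝ | F y = y} ∩ Icc a x).Nonempty := ⟨a, ha, le_refl a, hax.le⟩
    have hSbdd : BddAbove ({y : ℝ | F y = y} ∩ Icc a x) := ⟨x, fun y hy => hy.2.2⟩
    obtain ⟨hFα, haα, hαx'⟩ := (hFixClosed.inter isClosed_Icc).csSup_mem hSne hSbdd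
    have hαx : sSup ({y : ℝ | F y = y} ∩ Icc a x) < x :=
      lt_of_le_of_ne hαx' (fun h => hxne (h ▸ hFα))
    have hTne : ({y : ℝ | F y = y} ∩ Icc x b).Nonempty := ⟨b, hb, hxb.le, le_refl b⟩
    have hTbdd : BddBelow ({y : ℝ | F y = y} ∩ Icc x b) := ⟨x, fun y hy => hy.2.1⟩
    obtain ⟨hFβ, hxβ', hβb⟩ := (hFixClosed.inter isClosed_Icc).csInf_mem hTne hTbdd
    have hxβ : x < sInf ({y : ℝ | F y = y} ∩ Icc x b) :=
      lt_of_le_of_ne hxβ' (fun h => hxne (h.symm ▸ hFβ))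
    have hnofix : ∀ y ∈ Ioo (sSup ({y : ℝ | F y = y} ∩ Icc a x))
        (sInf ({y : ℝ | F y = y} ∩ Icc x b)), F y ≠ y := by
      intro y hy hFy
      rcases le_or_gt y x with h | h
      · exact absurd (le_csSup hSbdd ⟨hFy, haα.trans hy.1.le, h⟩) (not_le.mpr hy.1)
      · exact absurd (csInf_le hTbdd ⟨hFy, h.le, hy.2.le.trans hβb⟩) (not_le.mpr hy.2)
    exact pingpong_local hm hc hFα hFβ ⟨hαx, hxβ⟩ hnofix hW
      (hWfix _ ⟨haα, hαx'.trans hxJ.2⟩ hFα) (hWfix _ ⟨hxJ.1.trans hxβ', hβb⟩ hFβ)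
  choose! N hNopen hNmem m hNprop using key
  obtain ⟨t, htK, hcov⟩ := hK.elim_nhds_subcover N fun x hx => (hNopen x hx).mem_nhds (hNmem x hx)
  refine ⟨t.sup m, fun n hn x hx => ?_⟩
  obtain ⟨y, hyt, hxy⟩ := mem_iUnion₂.mp (hcov hx)
  exact hNprop y (htK y hyt) x hxy n (le_trans (Finset.le_sup hyt) hn)

/-! ### Lifts -/

lemma pingpong_lift_iterate {f : Equiv.Perm S1} {F : ℝ → ℝ}
    (h4 : ∀ x : ℝ, f ((x : ℝ) : S1) = ((F x : ℝ) : S1)) :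
    ∀ (n : ℕ) (x : ℝ), (⇑f)^[n] ((x : ℝ) : S1) = ((F^[n] x : ℝ) : S1) := by
  intro n
  induction n with
  | zero => intro x; simp
  | succ n ih =>
    intro x
    rw [Function.iterate_succ_apply', Function.iterate_succ_apply', ih, h4]

lemma pingpong_lift_inv {f : Equiv.Perm S1} {F : ℝ → ℝ} (h : IsLiftOf f F) :
    ∃ G, IsLiftOf f⁻¹ G := by
  obtain ⟨hm, hc, h1, h4⟩ := h
  have hFadd : ∀ (x : ℝ) (n : ℕ), F (x + n) = F x + n := by
    intro x n
    induction n with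
    | zero => simp
    | succ n ih => push_cast; rw [← add_assoc, h1, ih]; push_cast; ring
  have hsurj : Function.Surjective F := by
    intro y
    obtain ⟨n, hn⟩ := exists_nat_ge (|y - F 0|)
    have habs := abs_le.mp hn
    have hneg : F (0 - n) = F 0 - n := by
      have h' := hFadd (0 - (n:ℝ)) n
      simp only [sub_add_cancel] at h'
      linarith
    have hpos : F ((n:ℝ)) = F 0 + n := by simpa using hFadd 0 n
    have hle : (0:ℝ) - n ≤ n := by
      have : (0:ℝ) ≤ n := Nat.cast_nonneg n
      linarith
    obtain ⟨z, _, hz'⟩ := intermediate_value_Icc hle hc.continuousOn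
      (show y ∈ Icc (F (0 - (n:ℝ))) (F (n:ℝ)) by
        rw [hneg, hpos]; constructor <;> linarith)
    exact ⟨z, hz'⟩
  let e := hm.orderIsoOfSurjective F hsurj
  have hecoe : ∀ x, e x = F x := fun _ => rfl
  have hFG : ∀ y, F (e.symm y) = y := fun y => by
    rw [← hecoe]; exact e.apply_symm_apply y
  have hGF : ∀ x, e.symm (F x) = x := fun x => by
    rw [← hecoe]; exact e.symm_apply_apply x
  refine ⟨⇑e.symm, e.symm.strictMono, e.symm.continuous, ?_, ?_⟩
  · intro x
    apply hm.injective
    rw [hFG, h1, hFG]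
  · intro x
    have h5 : f ((e.symm x : ℝ) : S1) = ((x : ℝ) : S1) := by
      rw [h4, hFG]
    calc f⁻¹ ((x : ℝ) : S1) = f⁻¹ (f ((e.symm x : ℝ) : S1)) := by rw [h5]
      _ = ((e.symm x : ℝ) : S1) := f.symm_apply_apply _

/-! ### Circle dynamics -/

lemma pingpong_circleDyn {f : Equiv.Perm S1} (hf : IsPosHomeo f)
    {K : Set S1} (hK : IsClosed K) (hKfix : ∀ z ∈ K, f z ≠ z)
    {W : Set S1} (hW : IsOpen W) (hWfix : ∀ z : S1, f z = z → z ∈ W)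
    (hfix : ∃ z : S1, f z = z) :
    ∃ L : ℕ, ∀ n ≥ L, ∀ z ∈ K, (⇑f)^[n] z ∈ W := by
  obtain ⟨F, hm, hc, h1, h4⟩ := hf
  obtain ⟨z₀, hz₀⟩ := hfix
  obtain ⟨y₀, rfl⟩ := QuotientAddGroup.mk_surjective z₀
  have hy₀ : ((F y₀ : ℝ) : S1) = ((y₀ : ℝ) : S1) := by rw [← h4]; exact hz₀
  rw [QuotientAddGroup.eq_iff_sub_mem] at hy₀
  set r : ℝ := F y₀ - y₀ with hrdef
  have hr0 : ((r : ℝ) : S1) = 0 := (QuotientAddGroup.eq_zero_iff r).mpr hy₀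
  set G : ℝ → ℝ := fun x => F x - r with hGdef
  have hGm : StrictMono G := fun x y hxy => by
    simp only [hGdef]; exact sub_lt_sub_right (hm hxy) r
  have hGc : Continuous G := hc.sub continuous_const
  have hG1 : ∀ x, G (x + 1) = G x + 1 := by
    intro x; simp only [hGdef, h1]; ring
  have hG4 : ∀ x : ℝ, f ((x : ℝ) : S1) = ((G x : ℝ) : S1) := by
    intro x
    rw [h4]
    have : ((G x : ℝ) : S1) = ((F x : ℝ) : S1) - ((r : ℝ) : S1) := by
      simp only [hGdef]
      push_cast
      rfl
    rw [this, hr0, sub_zero]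
  have hGy₀ : G y₀ = y₀ := by simp only [hGdef, hrdef]; ring
  have hGy₁ : G (y₀ + 1) = y₀ + 1 := by rw [hG1, hGy₀]
  have hπc : Continuous ((↑·) : ℝ → S1) := continuous_quotient_mk'
  have hK'c : IsCompact (((↑·) : ℝ → S1) ⁻¹' K ∩ Icc y₀ (y₀ + 1)) :=
    isCompact_Icc.inter_left (hK.preimage hπc)
  have hK'fix : ∀ x ∈ ((↑·) : ℝ → S1) ⁻¹' K ∩ Icc y₀ (y₀ + 1), G x ≠ x := by
    intro x hx hGx
    exact hKfix _ hx.1 (by rw [hG4, hGx])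
  have hW'fix : ∀ x ∈ Icc y₀ (y₀ + 1), G x = x → x ∈ ((↑·) : ℝ → S1) ⁻¹' W := by
    intro x _ hGx
    exact hWfix _ (by rw [hG4, hGx])
  obtain ⟨L, hL⟩ := pingpong_realDyn hGm hGc hGy₀ hGy₁ hK'c inter_subset_right
    hK'fix (hW.preimage hπc) hW'fix
  refine ⟨L, fun n hn z hz => ?_⟩
  obtain ⟨y', rfl⟩ := QuotientAddGroup.mk_surjective z
  set y : ℝ := toIcoMod one_pos y₀ y' with hydef
  have hyy' : ((y : ℝ) : S1) = ((y' : ℝ) : S1) := by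
    rw [QuotientAddGroup.eq_iff_sub_mem, hydef, toIcoMod]
    simpa using AddSubgroup.zsmul_mem_zmultiples (1:ℝ) (-(toIcoDiv one_pos y₀ y'))
  have hymem : y ∈ ((↑·) : ℝ → S1) ⁻¹' K ∩ Icc y₀ (y₀ + 1) := by
    constructor
    · show ((y : ℝ) : S1) ∈ K
      rw [hyy']; exact hz
    · exact Ico_subset_Icc_self (toIcoMod_mem_Ico one_pos y₀ y')
  have := hL n hn y hymem
  rw [← hyy', pingpong_lift_iterate hG4 n y]
  exact this

/-- Combined two-sided dynamics: all sufficiently high forward and backward iterates of `f`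
push `K` into `W`. -/
lemma pingpong_circleDyn2 {f : Equiv.Perm S1} (hf : IsPosHomeo f)
    {K : Set S1} (hK : IsClosed K) (hKfix : ∀ z ∈ K, f z ≠ z)
    {W : Set S1} (hW : IsOpen W) (hWfix : ∀ z : S1, f z = z → z ∈ W)
    (hfix : ∃ z : S1, f z = z) :
    ∃ L : ℕ, 1 ≤ L ∧ ∀ n ≥ L, ∀ z ∈ K, (⇑f)^[n] z ∈ W ∧ (⇑f⁻¹)^[n] z ∈ W := by
  obtain ⟨F, hF⟩ := hf
  obtain ⟨L₁, hL₁⟩ := pingpong_circleDyn ⟨F, hF⟩ hK hKfix hW hWfix hfix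
  obtain ⟨G, hG⟩ := pingpong_lift_inv hF
  have hKfix' : ∀ z ∈ K, f⁻¹ z ≠ z := by
    intro z hz hinv
    exact hKfix z hz (by nth_rewrite 1 [← hinv]; exact f.apply_symm_apply z)
  have hWfix' : ∀ z : S1, f⁻¹ z = z → z ∈ W := by
    intro z hinv
    exact hWfix z (by nth_rewrite 1 [← hinv]; exact f.apply_symm_apply z)
  have hfix' : ∃ z : S1, f⁻¹ z = z := by
    obtain ⟨z, hz⟩ := hfix
    exact ⟨z, by nth_rewrite 1 [← hz]; exact f.symm_apply_apply z⟩
  obtain ⟨L₂, hL₂⟩ := pingpong_circleDyn ⟨G, hG⟩ hK hKfix' hW hWfix' hfix'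
  refine ⟨max (max L₁ L₂) 1, le_max_right _ _, fun n hn z hz => ?_⟩
  exact ⟨hL₁ n (le_trans (le_trans (le_max_left _ _) (le_max_left _ _)) hn) z hz,
    hL₂ n (le_trans (le_trans (le_max_right _ _) (le_max_left _ _)) hn) z hz⟩

/-- Key power estimate: all nonzero integer powers of `f^L` push `K` into `W`. -/
lemma pingpong_zpow {f : Equiv.Perm S1} {K W : Set S1} {L : ℕ} (hL1 : 1 ≤ L)
    (h : ∀ n ≥ L, ∀ z ∈ K, (⇑f)^[n] z ∈ W ∧ (⇑f⁻¹)^[n] z ∈ W) :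
    ∀ n : ℤ, n ≠ 0 → ∀ z ∈ K, ((f ^ L) ^ n) z ∈ W := by
  intro n hn z hz
  rcases lt_or_gt_of_ne hn with hneg | hpos
  · have hcast : (f ^ L) ^ n = (f⁻¹) ^ (L * (-n).toNat) := by
      calc (f ^ L) ^ n = (f ^ L) ^ (-(((-n).toNat : ℤ))) := by congr 1; omega
        _ = ((f ^ L)⁻¹) ^ (((-n).toNat : ℤ)) := by rw [zpow_neg, inv_zpow]
        _ = ((f ^ L)⁻¹) ^ ((-n).toNat) := zpow_natCast _ _
        _ = (f⁻¹) ^ (L * (-n).toNat) := by simp [inv_pow, pow_mul]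
    rw [hcast, ← Equiv.Perm.iterate_eq_pow]
    exact (h (L * (-n).toNat) (Nat.le_mul_of_pos_right L (by omega)) z hz).2
  · have hcast : (f ^ L) ^ n = f ^ (L * n.toNat) := by
      have h' : (f ^ L) ^ n = (f ^ L) ^ (n.toNat : ℤ) := by rw [Int.toNat_of_nonneg hpos.le]
      rw [h', zpow_natCast, ← pow_mul]
    rw [hcast, ← Equiv.Perm.iterate_eq_pow]
    exact (h (L * n.toNat) (Nat.le_mul_of_pos_right L (by omega)) z hz).1

/-! ### Main theorem -/

/-- If two orientation-preserving circle homeomorphisms each have fixed points but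
have no common fixed point, then together they generate a group containing a
non-abelian free subgroup. -/
theorem stmt4 (f g : Equiv.Perm S1) (hf : IsPosHomeo f) (hg : IsPosHomeo g)
    (hfixf : {x : S1 | f x = x}.Nonempty) (hfixg : {x : S1 | g x = x}.Nonempty)
    (hdisj : {x : S1 | f x = x} ∩ {x : S1 | g x = x} = ∅) :
    ∃ φ : FreeGroup (Fin 2) →* Equiv.Perm S1,
      Function.Injective φ ∧ ∀ w, φ w ∈ Subgroup.closure {f, g} := by
  classical
  -- continuity of f and g
  have hcont : ∀ (h : Equiv.Perm S1), IsPosHomeo h → Continuous ⇑h := by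
    rintro h ⟨F, _, hc, _, h4⟩
    refine (QuotientAddGroup.isOpenQuotientMap_mk.continuous_comp_iff).mp ?_
    have : (⇑h ∘ (QuotientAddGroup.mk : ℝ → S1)) = fun x : ℝ => ((F x : ℝ) : S1) := by
      funext x; exact h4 x
    rw [this]
    exact continuous_quotient_mk'.comp hc
  have hfc : Continuous ⇑f := hcont f hf
  have hgc : Continuous ⇑g := hcont g hg
  -- the fixed point sets
  have hFfclosed : IsClosed {x : S1 | f x = x} := isClosed_eq hfc continuous_id
  have hFgclosed : IsClosed {x : S1 | g x = x} := isClosed_eq hgc continuous_id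
  have hFfcompact : IsCompact {x : S1 | f x = x} := hFfclosed.isCompact
  have hd : Disjoint {x : S1 | f x = x} {x : S1 | g x = x} :=
    Set.disjoint_iff_inter_eq_empty.mpr hdisj
  obtain ⟨δ, hδ, hdisj2⟩ := hd.exists_cthickenings hFfcompact hFgclosed
  set U : Set S1 := thickening δ {x : S1 | f x = x} with hUdef
  set V : Set S1 := thickening δ {x : S1 | g x = x} with hVdef
  have hUopen : IsOpen U := isOpen_thickening
  have hVopen : IsOpen V := isOpen_thickening
  have hUV : Disjoint U V :=
    hdisj2.mono (thickening_subset_cthickening _ _) (thickening_subset_cthickening _ _)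
  have hFfU : {x : S1 | f x = x} ⊆ U := self_subset_thickening hδ _
  have hFgV : {x : S1 | g x = x} ⊆ V := self_subset_thickening hδ _
  -- dynamics of f on the compact set `cthickening δ Fix(g)` ⊇ V
  have hdynf : ∃ L : ℕ, 1 ≤ L ∧ ∀ n ≥ L, ∀ z ∈ cthickening δ {x : S1 | g x = x},
      (⇑f)^[n] z ∈ U ∧ (⇑f⁻¹)^[n] z ∈ U := by
    apply pingpong_circleDyn2 hf (isClosed_cthickening)
    · intro z hz hfz
      exact Set.disjoint_left.mp hdisj2
        (self_subset_cthickening _ (show z ∈ {x : S1 | f x = x} from hfz)) hz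
    · exact hUopen
    · exact fun z hz => hFfU hz
    · exact hfixf
  have hdyng : ∃ L : ℕ, 1 ≤ L ∧ ∀ n ≥ L, ∀ z ∈ cthickening δ {x : S1 | f x = x},
      (⇑g)^[n] z ∈ V ∧ (⇑g⁻¹)^[n] z ∈ V := by
    apply pingpong_circleDyn2 hg (isClosed_cthickening)
    · intro z hz hgz
      exact Set.disjoint_right.mp hdisj2
        (self_subset_cthickening _ (show z ∈ {x : S1 | g x = x} from hgz)) hz
    · exact hVopen
    · exact fun z hz => hFgV hz
    · exact hfixg
  obtain ⟨Lf, hLf1, hLf⟩ := hdynf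
  obtain ⟨Lg, hLg1, hLg⟩ := hdyng
  set L : ℕ := max Lf Lg with hLdef
  have hL1 : 1 ≤ L := le_trans hLf1 (le_max_left _ _)
  have hLf' : ∀ n ≥ L, ∀ z ∈ cthickening δ {x : S1 | g x = x},
      (⇑f)^[n] z ∈ U ∧ (⇑f⁻¹)^[n] z ∈ U :=
    fun n hn => hLf n (le_trans (le_max_left _ _) hn)
  have hLg' : ∀ n ≥ L, ∀ z ∈ cthickening δ {x : S1 | f x = x},
      (⇑g)^[n] z ∈ V ∧ (⇑g⁻¹)^[n] z ∈ V :=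
    fun n hn => hLg n (le_trans (le_max_right _ _) hn)
  have hfpow := pingpong_zpow hL1 hLf'
  have hgpow := pingpong_zpow hL1 hLg'
  -- set up the ping-pong data
  set c : Fin 2 → Equiv.Perm S1 := ![f ^ L, g ^ L] with hcdef
  set X : Fin 2 → Set S1 := ![U, V] with hXdef
  refine ⟨FreeGroup.lift c, ?_, ?_⟩
  · -- injectivity via the ping-pong lemma for free products
    have heq : FreeGroup.lift c =
        (Monoid.CoprodI.lift fun i : Fin 2 => FreeGroup.lift fun _ : Unit => c i).comp
          (@freeGroupEquivCoprodI (Fin 2)).toMonoidHom := by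
      ext i; simp
    rw [heq, MonoidHom.coe_comp]
    refine Function.Injective.comp ?_ (MulEquiv.injective _)
    have hcard3 : (3 : Cardinal) ≤ Cardinal.mk (FreeGroup Unit) := by
      exact_mod_cast (Cardinal.nat_lt_aleph0 3).le.trans (Cardinal.aleph0_le_mk (FreeGroup Unit))
    apply Monoid.CoprodI.lift_injective_of_ping_pong
      (fun i : Fin 2 => FreeGroup.lift fun _ : Unit => c i)
      (Or.inr ⟨0, hcard3⟩) X ?_ ?_ ?_
    · -- nonempty
      intro i
      match i with
      | 0 =>
        obtain ⟨z, hz⟩ := hfixf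
        exact ⟨z, by simpa [hXdef] using hFfU hz⟩
      | 1 =>
        obtain ⟨z, hz⟩ := hfixg
        exact ⟨z, by simpa [hXdef] using hFgV hz⟩
    · -- pairwise disjoint
      intro i j hij
      match i, j with
      | 0, 0 => exact absurd rfl hij
      | 1, 1 => exact absurd rfl hij
      | 0, 1 => simpa [Function.onFun, hXdef] using hUV
      | 1, 0 => simpa [Function.onFun, hXdef] using hUV.symm
    · -- ping pong condition
      intro i j hij
      match i, j with
      | 0, 0 => exact absurd rfl hij
      | 1, 1 => exact absurd rfl hij
      | 0, 1 =>
        refine FreeGroup.freeGroupUnitEquivInt.forall_congr_left.mpr ?_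
        intro n hne1
        change (FreeGroup.lift fun _ : Unit => c 0) (FreeGroup.of () ^ n) • X 1 ⊆ X 0
        simp only [map_zpow, FreeGroup.lift_apply_of]
        have hn : n ≠ 0 := by
          rintro rfl
          exact hne1 (by simp [FreeGroup.freeGroupUnitEquivInt])
        intro z hzmem
        obtain ⟨w, hw, rfl⟩ := hzmem
        have hwV : w ∈ cthickening δ {x : S1 | g x = x} := by
          apply thickening_subset_cthickening
          simpa [hXdef] using hw
        have := hfpow n hn w hwV
        simpa [hcdef, hXdef, Equiv.Perm.smul_def] using this
      | 1, 0 =>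
        refine FreeGroup.freeGroupUnitEquivInt.forall_congr_left.mpr ?_
        intro n hne1
        change (FreeGroup.lift fun _ : Unit => c 1) (FreeGroup.of () ^ n) • X 0 ⊆ X 1
        simp only [map_zpow, FreeGroup.lift_apply_of]
        have hn : n ≠ 0 := by
          rintro rfl
          exact hne1 (by simp [FreeGroup.freeGroupUnitEquivInt])
        intro z hzmem
        obtain ⟨w, hw, rfl⟩ := hzmem
        have hwU : w ∈ cthickening δ {x : S1 | f x = x} := by
          apply thickening_subset_cthickening
          simpa [hXdef] using hw
        have := hgpow n hn w hwU
        simpa [hcdef, hXdef, Equiv.Perm.smul_def] using this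
  · -- membership in the closure
    intro w
    have hfmem : f ∈ Subgroup.closure ({f, g} : Set (Equiv.Perm S1)) :=
      Subgroup.subset_closure (by simp)
    have hgmem : g ∈ Subgroup.closure ({f, g} : Set (Equiv.Perm S1)) :=
      Subgroup.subset_closure (by simp)
    induction w using FreeGroup.induction_on with
    | C1 => exact one_mem _
    | of x =>
      have : FreeGroup.lift c (FreeGroup.of x) = c x := FreeGroup.lift_apply_of
      rw [this]
      fin_cases x
      · exact pow_mem hfmem L
      · exact pow_mem hgmem L
    | inv_of x ih => rw [map_inv]; exact inv_mem ih
    | mul x y ihx ihy => rw [map_mul]; exact mul_mem ihx ihy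
end

section
/- Let G be a subgroup of the orientation-preserving homeomorphisms of the circle with no non-abelian free subgroup. Then the set G₀ = {g ∈ G : g has a fixed point in S¹} is a normal subgroup of G. -/
namespace Stmt5
open Set Filter Topology

section Core
variable {Φ : ℝ → ℝ}

lemma iterate_mem_gap (hm : StrictMono Φ) {a b : ℝ} (ha : Φ a = a) (hb : Φ b = b) :
    ∀ n, ∀ y ∈ Ioo a b, Φ^[n] y ∈ Ioo a b := by
  intro n
  induction n with
  | zero => simp
  | succ k ih =>
    intro y hy
    rw [Function.iterate_succ_apply']
    have h1 := ih y hy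
    constructor
    · have := hm h1.1; rwa [ha] at this
    · have := hm h1.2; rwa [hb] at this

lemma iter_tendsto_top (hm : StrictMono Φ) (hc : Continuous Φ) {a b α : ℝ}
    (ha : Φ a = a) (hb : Φ b = b) (hsign : ∀ y ∈ Ioo a b, y < Φ y) (hα : α ∈ Ioo a b) :
    Tendsto (fun n => Φ^[n] α) atTop (nhds b) := by
  set u : ℕ → ℝ := fun n => Φ^[n] α with hu
  have hmem : ∀ n, u n ∈ Ioo a b := fun n => iterate_mem_gap hm ha hb n α hα
  have hmono : Monotone u := by
    apply monotone_nat_of_le_succ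
    intro n
    have : u (n+1) = Φ (u n) := Function.iterate_succ_apply' Φ n α
    rw [this]
    exact (hsign _ (hmem n)).le
  have hbdd : BddAbove (Set.range u) := ⟨b, by rintro _ ⟨n, rfl⟩; exact (hmem n).2.le⟩
  have htend : Tendsto u atTop (nhds (⨆ n, u n)) := tendsto_atTop_ciSup hmono hbdd
  set L : ℝ := ⨆ n, u n with hL
  have hfix : Φ L = L := by
    have h1 : Tendsto (fun n => Φ (u n)) atTop (nhds (Φ L)) := (hc.tendsto L).comp htend
    have h2 : (fun n => Φ (u n)) = fun n => u (n+1) := by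
      funext n; exact (Function.iterate_succ_apply' Φ n α).symm
    rw [h2] at h1
    have h3 : Tendsto (fun n => u (n+1)) atTop (nhds L) := htend.comp (tendsto_add_atTop_nat 1)
    exact tendsto_nhds_unique h1 h3
  have hLb : L = b := by
    have hle : L ≤ b := ciSup_le fun n => (hmem n).2.le
    rcases eq_or_lt_of_le hle with h | h
    · exact h
    · exfalso
      have hgt : a < L := lt_of_lt_of_le (hmem 0).1 (le_ciSup hbdd 0)
      exact absurd hfix (ne_of_gt (hsign L ⟨hgt, h⟩))
  rwa [hLb] at htend

lemma iter_tendsto_bot (hm : StrictMono Φ) (hc : Continuous Φ) {a b α : ℝ}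
    (ha : Φ a = a) (hb : Φ b = b) (hsign : ∀ y ∈ Ioo a b, Φ y < y) (hα : α ∈ Ioo a b) :
    Tendsto (fun n => Φ^[n] α) atTop (nhds a) := by
  set u : ℕ → ℝ := fun n => Φ^[n] α with hu
  have hmem : ∀ n, u n ∈ Ioo a b := fun n => iterate_mem_gap hm ha hb n α hα
  have hmono : Antitone u := by
    apply antitone_nat_of_succ_le
    intro n
    have : u (n+1) = Φ (u n) := Function.iterate_succ_apply' Φ n α
    rw [this]
    exact (hsign _ (hmem n)).le
  have hbdd : BddBelow (Set.range u) := ⟨a, by rintro _ ⟨n, rfl⟩; exact (hmem n).1.le⟩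
  have htend : Tendsto u atTop (nhds (⨅ n, u n)) := tendsto_atTop_ciInf hmono hbdd
  set L : ℝ := ⨅ n, u n with hL
  have hfix : Φ L = L := by
    have h1 : Tendsto (fun n => Φ (u n)) atTop (nhds (Φ L)) := (hc.tendsto L).comp htend
    have h2 : (fun n => Φ (u n)) = fun n => u (n+1) := by
      funext n; exact (Function.iterate_succ_apply' Φ n α).symm
    rw [h2] at h1
    have h3 : Tendsto (fun n => u (n+1)) atTop (nhds L) := htend.comp (tendsto_add_atTop_nat 1)
    exact tendsto_nhds_unique h1 h3
  have hLa : L = a := by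
    have hle : a ≤ L := le_ciInf fun n => (hmem n).1.le
    rcases eq_or_lt_of_le hle with h | h
    · exact h.symm
    · exfalso
      have hlt : L < b := lt_of_le_of_lt (ciInf_le hbdd 0) (hmem 0).2
      exact absurd hfix (ne_of_lt (hsign L ⟨h, hlt⟩))
  rwa [hLa] at htend

end Core


lemma coe_eq_coe {x y : ℝ} : ((x : ℝ) : S1) = ((y : ℝ) : S1) ↔ ∃ m : ℤ, x - y = m := by
  rw [show (((x:ℝ) : S1) = ((y:ℝ):S1)) ↔ x - y ∈ AddSubgroup.zmultiples (1:ℝ) from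
    QuotientAddGroup.eq_iff_sub_mem, AddSubgroup.mem_zmultiples_iff]
  constructor
  · rintro ⟨k, hk⟩; exact ⟨k, by simpa using hk.symm⟩
  · rintro ⟨m, hm⟩; exact ⟨m, by simpa using hm.symm⟩

lemma coe_surj (s : S1) : ∃ x : ℝ, ((x : ℝ) : S1) = s := QuotientAddGroup.mk_surjective s

lemma coe_add_int (x : ℝ) (m : ℤ) : ((x + m : ℝ) : S1) = ((x : ℝ) : S1) :=
  coe_eq_coe.mpr ⟨m, by ring⟩

/-- A bundled lift of a circle homeomorphism, with inverse. -/
structure RHomeo where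
  F : ℝ → ℝ
  Fi : ℝ → ℝ
  mono : StrictMono F
  cont : Continuous F
  per : ∀ x, F (x + 1) = F x + 1
  li : ∀ x, Fi (F x) = x
  ri : ∀ x, F (Fi x) = x

namespace RHomeo

variable (L : RHomeo)

lemma injF : Function.Injective L.F := L.mono.injective

lemma mono_i : StrictMono L.Fi := by
  intro x y h
  rw [← L.mono.lt_iff_lt, L.ri, L.ri]
  exact h

lemma cont_i : Continuous L.Fi := by
  have hsurj : Function.Surjective L.F := fun y => ⟨L.Fi y, L.ri y⟩
  let e : ℝ ≃o ℝ := StrictMono.orderIsoOfSurjective L.F L.mono hsurj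
  have h : L.Fi = e.symm := by
    funext x
    apply L.injF
    rw [L.ri]
    exact (e.apply_symm_apply x).symm
  rw [h]
  exact e.symm.continuous

lemma per_int : ∀ (m : ℤ) (x : ℝ), L.F (x + m) = L.F x + m := by
  have hnat : ∀ (n : ℕ) (x : ℝ), L.F (x + n) = L.F x + n := by
    intro n
    induction n with
    | zero => simp
    | succ k ih =>
      intro x
      have : (x + (k + 1) : ℝ) = (x + k) + 1 := by push_cast; ring
      rw [show ((k:ℝ) + 1 : ℝ) = ((k+1 : ℕ) : ℝ) by push_cast; ring] at this
      push_cast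
      rw [show x + ((k:ℝ)+1) = (x + k) + 1 by ring, L.per, ih x]
      ring
  intro m x
  cases m with
  | ofNat n => simpa using hnat n x
  | negSucc n =>
      have := hnat (n+1) (x + Int.negSucc n)
      rw [show (x + (Int.negSucc n : ℝ) + ((n+1:ℕ):ℝ) : ℝ) = x by
        simp [Int.negSucc_eq]; push_cast; ring] at this
      push_cast [Int.negSucc_eq] at this ⊢
      linarith
  
lemma per_i_int : ∀ (m : ℤ) (x : ℝ), L.Fi (x + m) = L.Fi x + m := by
  intro m x
  apply L.injF
  rw [L.ri, L.per_int, L.ri]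

/-- the inverse homeomorphism -/
def symm : RHomeo := ⟨L.Fi, L.F, L.mono_i, L.cont_i, fun x => by
    simpa using L.per_i_int 1 x, L.ri, L.li⟩

lemma iter_per_int (n : ℕ) (m : ℤ) (x : ℝ) : L.F^[n] (x + m) = L.F^[n] x + m := by
  induction n with
  | zero => simp
  | succ k ih =>
      rw [Function.iterate_succ_apply', Function.iterate_succ_apply', ih, L.per_int]

/-- The fixed point set of the lift. -/
def A : Set ℝ := {x | L.F x = x}

lemma isClosed_A : IsClosed L.A :=
  isClosed_eq L.cont continuous_id

lemma A_add_int {x : ℝ} (hx : x ∈ L.A) (m : ℤ) : x + m ∈ L.A := by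
  simp only [A, Set.mem_setOf_eq] at *
  rw [L.per_int]; rw [hx]

lemma A_symm : L.symm.A = L.A := by
  ext x
  simp only [A, symm, Set.mem_setOf_eq]
  constructor
  · intro h; nth_rewrite 1 [← h]; rw [L.ri]
  · intro h; nth_rewrite 1 [← h]; rw [L.li]

/-- Normalization: if a lift satisfies `F x = x + m` somewhere with `m : ℤ`, and has an actual
fixed point, then `m = 0` there. -/
lemma int_transl_eq_fix {x₀ : ℝ} (h₀ : x₀ ∈ L.A) {x : ℝ} {m : ℤ} (h : L.F x = x + m) :
    x ∈ L.A := by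
  have h0 : L.F x₀ = x₀ := h₀
  set j : ℤ := ⌊x - x₀⌋ with hj
  rcases eq_or_lt_of_le (by
      have := Int.floor_le (x - x₀); linarith : x₀ + (j:ℝ) ≤ x) with heq | hlt
  · have : L.F x = x := by
      rw [← heq, show (x₀ + (j:ℝ)) = x₀ + j from rfl, L.per_int, h0]
    exact this
  · have hlt2 : x < x₀ + j + 1 := by
      have := Int.lt_floor_add_one (x - x₀); push_cast; linarith
    have hb1 : x₀ + (j:ℝ) < L.F x := by
      have := L.mono hlt
      rwa [L.per_int, h0] at this
    have hb2 : L.F x < x₀ + (j:ℝ) + 1 := by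
      have hmono := L.mono (show x < x₀ + ((j+1 : ℤ):ℝ) by push_cast; linarith)
      rw [L.per_int, h0] at hmono
      push_cast at hmono
      linarith
    have : (m : ℝ) < 1 ∧ (-1 : ℝ) < m := by constructor <;> nlinarith [h]
    have hm0 : m = 0 := by
      have h1 : m < 1 := by exact_mod_cast this.1
      have h2 : (-1 : ℤ) < m := by exact_mod_cast this.2
      omega
    simpa [A, hm0] using h

end RHomeo

end Stmt5

namespace Stmt5
open Set Filter Topology

namespace RHomeo

variable (L : RHomeo)

/-- left endpoint of the gap of `x`. -/
noncomputable def ga (x : ℝ) : ℝ := sSup (L.A ∩ Set.Iic x)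
/-- right endpoint of the gap of `x`. -/
noncomputable def gb (x : ℝ) : ℝ := sInf (L.A ∩ Set.Ici x)

variable (hA : L.A.Nonempty)
include hA

lemma exists_A_le (x : ℝ) : ∃ a ∈ L.A, a ≤ x := by
  obtain ⟨x₀, hx₀⟩ := hA
  refine ⟨x₀ + (⌊x - x₀⌋ : ℤ), L.A_add_int hx₀ _, ?_⟩
  have := Int.floor_le (x - x₀); linarith

lemma exists_A_ge (x : ℝ) : ∃ a ∈ L.A, x ≤ a := by
  obtain ⟨x₀, hx₀⟩ := hA
  refine ⟨x₀ + (⌈x - x₀⌉ : ℤ), L.A_add_int hx₀ _, ?_⟩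
  have := Int.le_ceil (x - x₀); linarith

lemma ga_spec (x : ℝ) : L.ga x ∈ L.A ∧ L.ga x ≤ x := by
  obtain ⟨a, ha, hax⟩ := L.exists_A_le hA x
  have hne : (L.A ∩ Set.Iic x).Nonempty := ⟨a, ha, hax⟩
  have hbdd : BddAbove (L.A ∩ Set.Iic x) := ⟨x, fun y hy => hy.2⟩
  have hcl : IsClosed (L.A ∩ Set.Iic x) := L.isClosed_A.inter isClosed_Iic
  have hmem := hcl.csSup_mem hne hbdd
  exact ⟨hmem.1, hmem.2⟩

lemma gb_spec (x : ℝ) : L.gb x ∈ L.A ∧ x ≤ L.gb x := by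
  obtain ⟨a, ha, hax⟩ := L.exists_A_ge hA x
  have hne : (L.A ∩ Set.Ici x).Nonempty := ⟨a, ha, hax⟩
  have hbdd : BddBelow (L.A ∩ Set.Ici x) := ⟨x, fun y hy => hy.2⟩
  have hcl : IsClosed (L.A ∩ Set.Ici x) := L.isClosed_A.inter isClosed_Ici
  have hmem := hcl.csInf_mem hne hbdd
  exact ⟨hmem.1, hmem.2⟩

lemma mem_gap {x : ℝ} (hx : x ∉ L.A) : x ∈ Ioo (L.ga x) (L.gb x) :=
  ⟨lt_of_le_of_ne (L.ga_spec hA x).2 (fun h => hx (h ▸ (L.ga_spec hA x).1)),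
   lt_of_le_of_ne (L.gb_spec hA x).2 (fun h => hx (h ▸ (L.gb_spec hA x).1))⟩

omit hA in
lemma gap_no_fix {x : ℝ} : ∀ y ∈ Ioo (L.ga x) (L.gb x), y ∉ L.A := by
  intro y hy hyA
  rcases le_total y x with h | h
  · have : y ≤ L.ga x := le_csSup ⟨x, fun z hz => hz.2⟩ ⟨hyA, h⟩
    exact absurd this (not_le.mpr hy.1)
  · have : L.gb x ≤ y := csInf_le ⟨x, fun z hz => hz.2⟩ ⟨hyA, h⟩
    exact absurd this (not_le.mpr hy.2)

lemma gap_eq {x y : ℝ} (hy : y ∈ Ioo (L.ga x) (L.gb x)) :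
    L.ga y = L.ga x ∧ L.gb y = L.gb x := by
  have hyA : y ∉ L.A := L.gap_no_fix y hy
  constructor
  · have h1 : L.ga x ≤ L.ga y := le_csSup ⟨y, fun z hz => hz.2⟩ ⟨(L.ga_spec hA x).1, hy.1.le⟩
    rcases eq_or_lt_of_le h1 with h | h
    · exact h.symm
    · exfalso
      refine L.gap_no_fix (L.ga y) ⟨h, ?_⟩ (L.ga_spec hA y).1
      exact lt_of_le_of_lt (L.ga_spec hA y).2 hy.2
  · have h1 : L.gb y ≤ L.gb x := csInf_le ⟨y, fun z hz => hz.2⟩ ⟨(L.gb_spec hA x).1, hy.2.le⟩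
    rcases eq_or_lt_of_le h1 with h | h
    · exact h
    · exfalso
      refine L.gap_no_fix (L.gb y) ⟨?_, h⟩ (L.gb_spec hA y).1
      exact lt_of_lt_of_le hy.1 (L.gb_spec hA y).2

omit hA

lemma ga_add_int (x : ℝ) (m : ℤ) (hA : L.A.Nonempty) : L.ga (x + m) = L.ga x + m := by
  have hset : L.A ∩ Set.Iic (x + m) = (fun t => t + (m:ℝ)) '' (L.A ∩ Set.Iic x) := by
    ext t
    constructor
    · rintro ⟨ht1, ht2⟩
      refine ⟨t - m, ⟨?_, ?_⟩, by ring⟩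
      · have := L.A_add_int ht1 (-m)
        rwa [show t + ((-m : ℤ) : ℝ) = t - m by push_cast; ring] at this
      · simp only [Set.mem_Iic] at ht2 ⊢; linarith
    · rintro ⟨s, ⟨hs1, hs2⟩, rfl⟩
      refine ⟨L.A_add_int hs1 m, ?_⟩
      simp only [Set.mem_Iic] at hs2 ⊢; linarith
  obtain ⟨a, ha, hax⟩ := L.exists_A_le hA x
  have hne : (L.A ∩ Set.Iic x).Nonempty := ⟨a, ha, hax⟩
  have hbdd : BddAbove (L.A ∩ Set.Iic x) := ⟨x, fun y hy => hy.2⟩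
  have hlub : IsLUB (L.A ∩ Set.Iic x) (L.ga x) := isLUB_csSup hne hbdd
  have hlub2 : IsLUB ((fun t => t + (m:ℝ)) '' (L.A ∩ Set.Iic x)) (L.ga x + m) := by
    constructor
    · rintro _ ⟨s, hs, rfl⟩
      have := hlub.1 hs; simpa using this
    · intro u hu
      have : L.ga x ≤ u - m := by
        apply hlub.2
        intro s hs
        have := hu ⟨s, hs, rfl⟩
        simp only at this; linarith
      linarith
  rw [ga, hset, hlub2.csSup_eq (hne.image _)]

lemma gb_add_int (x : ℝ) (m : ℤ) (hA : L.A.Nonempty) : L.gb (x + m) = L.gb x + m := by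
  have hset : L.A ∩ Set.Ici (x + m) = (fun t => t + (m:ℝ)) '' (L.A ∩ Set.Ici x) := by
    ext t
    constructor
    · rintro ⟨ht1, ht2⟩
      refine ⟨t - m, ⟨?_, ?_⟩, by ring⟩
      · have := L.A_add_int ht1 (-m)
        rwa [show t + ((-m : ℤ) : ℝ) = t - m by push_cast; ring] at this
      · simp only [Set.mem_Ici] at ht2 ⊢; linarith
    · rintro ⟨s, ⟨hs1, hs2⟩, rfl⟩
      refine ⟨L.A_add_int hs1 m, ?_⟩
      simp only [Set.mem_Ici] at hs2 ⊢; linarith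
  obtain ⟨a, ha, hax⟩ := L.exists_A_ge hA x
  have hne : (L.A ∩ Set.Ici x).Nonempty := ⟨a, ha, hax⟩
  have hbdd : BddBelow (L.A ∩ Set.Ici x) := ⟨x, fun y hy => hy.2⟩
  have hglb : IsGLB (L.A ∩ Set.Ici x) (L.gb x) := isGLB_csInf hne hbdd
  have hglb2 : IsGLB ((fun t => t + (m:ℝ)) '' (L.A ∩ Set.Ici x)) (L.gb x + m) := by
    constructor
    · rintro _ ⟨s, hs, rfl⟩
      have := hglb.1 hs; simpa using this
    · intro u hu
      have : u - m ≤ L.gb x := by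
        apply hglb.2
        intro s hs
        have := hu ⟨s, hs, rfl⟩
        simp only at this; linarith
      linarith
  rw [gb, hset, hglb2.csInf_eq (hne.image _)]

/-- Sign of `F - id` is constant on a gap. -/
lemma sign_gap {a b : ℝ} (hgap : ∀ y ∈ Ioo a b, y ∉ L.A) {x : ℝ} (hx : x ∈ Ioo a b)
    (hFx : x < L.F x) : ∀ y ∈ Ioo a b, y < L.F y := by
  intro y hy
  by_contra hcon
  push_neg at hcon
  have hne : L.F y ≠ y := hgap y hy
  have hFy : L.F y < y := lt_of_le_of_ne hcon hne
  have hcont : Continuous fun t => L.F t - t := L.cont.sub continuous_id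
  rcases le_total x y with h | h
  · have hsub : Set.Icc x y ⊆ Ioo a b := fun z hz => ⟨lt_of_lt_of_le hx.1 hz.1, lt_of_le_of_lt hz.2 hy.2⟩
    have := intermediate_value_Icc' h hcont.continuousOn (a := x) (b := y)
      (Set.mem_Icc.mpr ⟨by linarith, by linarith⟩ : (0:ℝ) ∈ Set.Icc (L.F y - y) (L.F x - x))
    obtain ⟨z, hz, hz0⟩ := this
    have hz0' : L.F z - z = 0 := hz0
    exact hgap z (hsub hz) (by simp only [A, Set.mem_setOf_eq]; linarith [hz0'])
  · have hsub : Set.Icc y x ⊆ Ioo a b := fun z hz => ⟨lt_of_lt_of_le hy.1 hz.1, lt_of_le_of_lt hz.2 hx.2⟩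
    have := intermediate_value_Icc h hcont.continuousOn (a := y) (b := x)
      (Set.mem_Icc.mpr ⟨by linarith, by linarith⟩ : (0:ℝ) ∈ Set.Icc (L.F y - y) (L.F x - x))
    obtain ⟨z, hz, hz0⟩ := this
    have hz0' : L.F z - z = 0 := hz0
    exact hgap z (hsub hz) (by simp only [A, Set.mem_setOf_eq]; linarith [hz0'])

end RHomeo
end Stmt5

namespace Stmt5
open Set Filter Topology
namespace RHomeo
variable (L : RHomeo)

lemma fix_i {x : ℝ} (hx : x ∈ L.A) : L.Fi x = x := by
  have : L.Fi (L.F x) = x := L.li x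
  rwa [show L.F x = x from hx] at this

lemma iter_mono (n : ℕ) : StrictMono (L.F^[n]) := L.mono.iterate n

lemma iter_mono_i (n : ℕ) : StrictMono (L.Fi^[n]) := L.mono_i.iterate n

/-- `x` is within `ε` of the fixed-point set. -/
def near (ε x : ℝ) : Prop := ∃ a ∈ L.A, |x - a| < ε

lemma near_add_int {ε x : ℝ} (m : ℤ) (h : L.near ε x) : L.near ε (x + m) := by
  obtain ⟨a, ha, hd⟩ := h
  exact ⟨a + m, L.A_add_int ha m, by rwa [show x + m - (a + m) = x - a by ring]⟩

lemma gap_uniform (hA : L.A.Nonempty) {ε : ℝ} (hε : 0 < ε) {a b α β : ℝ}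
    (ha : a ∈ L.A) (hb : b ∈ L.A) (hgap : ∀ y ∈ Ioo a b, y ∉ L.A)
    (hα : α ∈ Ioo a b) (hβ : β ∈ Ioo a b) :
    ∃ N, ∀ n ≥ N, ∀ y ∈ Icc α β, L.near ε (L.F^[n] y) ∧ L.near ε (L.Fi^[n] y) := by
  have hFa : L.F a = a := ha
  have hFb : L.F b = b := hb
  have hFia : L.Fi a = a := L.fix_i ha
  have hFib : L.Fi b = b := L.fix_i hb
  have hIcc_sub : Icc α β ⊆ Ioo a b := fun y hy =>
    ⟨lt_of_lt_of_le hα.1 hy.1, lt_of_le_of_lt hy.2 hβ.2⟩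
  have hstep_i : ∀ y ∈ Ioo a b, L.Fi y ∈ Ioo a b := by
    intro y hy
    constructor
    · have := L.mono_i hy.1; rwa [hFia] at this
    · have := L.mono_i hy.2; rwa [hFib] at this
  have hstep : ∀ y ∈ Ioo a b, L.F y ∈ Ioo a b := by
    intro y hy
    constructor
    · have := L.mono hy.1; rwa [hFa] at this
    · have := L.mono hy.2; rwa [hFb] at this
  rcases lt_or_gt_of_ne (fun h : α = L.F α => hgap α hα h.symm) with hsgn | hsgn
  · -- increasing case
    have hs : ∀ y ∈ Ioo a b, y < L.F y := L.sign_gap hgap hα hsgn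
    have hsi : ∀ y ∈ Ioo a b, L.Fi y < y := by
      intro y hy
      have h1 := hstep_i y hy
      have := hs _ h1
      rwa [L.ri] at this
    have htop : Tendsto (fun n => L.F^[n] α) atTop (nhds b) :=
      iter_tendsto_top L.mono L.cont hFa hFb hs hα
    have hbot : Tendsto (fun n => L.Fi^[n] β) atTop (nhds a) :=
      iter_tendsto_bot L.mono_i L.cont_i hFia hFib hsi hβ
    have h1 : ∀ᶠ n in atTop, b - ε < L.F^[n] α :=
      htop.eventually (eventually_gt_nhds (by linarith))
    have h2 : ∀ᶠ n in atTop, L.Fi^[n] β < a + ε :=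
      hbot.eventually (eventually_lt_nhds (by linarith))
    obtain ⟨N₁, hN₁⟩ := eventually_atTop.mp h1
    obtain ⟨N₂, hN₂⟩ := eventually_atTop.mp h2
    refine ⟨max N₁ N₂, fun n hn y hy => ⟨?_, ?_⟩⟩
    · have hy' := hIcc_sub hy
      have hmem := iterate_mem_gap L.mono hFa hFb n y hy'
      have hge : L.F^[n] α ≤ L.F^[n] y := (L.iter_mono n).monotone hy.1
      have hgt := hN₁ n (le_trans (le_max_left _ _) hn)
      exact ⟨b, hb, by rw [abs_lt]; constructor <;> [linarith [hmem.2]; linarith [hmem.2]]⟩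
    · have hy' := hIcc_sub hy
      have hmem := iterate_mem_gap L.mono_i hFia hFib n y hy'
      have hle : L.Fi^[n] y ≤ L.Fi^[n] β := (L.iter_mono_i n).monotone hy.2
      have hlt := hN₂ n (le_trans (le_max_right _ _) hn)
      exact ⟨a, ha, by rw [abs_lt]; constructor <;> [linarith [hmem.1]; linarith [hmem.1]]⟩
  · -- decreasing case
    have hsgn' : α < L.Fi α := by
      have := L.mono_i hsgn
      rwa [L.li] at this
    have hsi : ∀ y ∈ Ioo a b, y < L.Fi y := by
      have hgap' : ∀ y ∈ Ioo a b, y ∉ L.symm.A := by rw [L.A_symm]; exact hgap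
      exact L.symm.sign_gap hgap' hα hsgn'
    have hs : ∀ y ∈ Ioo a b, L.F y < y := by
      intro y hy
      have h1 := hstep y hy
      have := hsi _ h1
      rwa [L.li] at this
    have htop : Tendsto (fun n => L.Fi^[n] α) atTop (nhds b) :=
      iter_tendsto_top L.mono_i L.cont_i hFia hFib hsi hα
    have hbot : Tendsto (fun n => L.F^[n] β) atTop (nhds a) :=
      iter_tendsto_bot L.mono L.cont hFa hFb hs hβ
    have h1 : ∀ᶠ n in atTop, b - ε < L.Fi^[n] α :=
      htop.eventually (eventually_gt_nhds (by linarith))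
    have h2 : ∀ᶠ n in atTop, L.F^[n] β < a + ε :=
      hbot.eventually (eventually_lt_nhds (by linarith))
    obtain ⟨N₁, hN₁⟩ := eventually_atTop.mp h1
    obtain ⟨N₂, hN₂⟩ := eventually_atTop.mp h2
    refine ⟨max N₁ N₂, fun n hn y hy => ⟨?_, ?_⟩⟩
    · have hy' := hIcc_sub hy
      have hmem := iterate_mem_gap L.mono hFa hFb n y hy'
      have hle : L.F^[n] y ≤ L.F^[n] β := (L.iter_mono n).monotone hy.2
      have hlt := hN₂ n (le_trans (le_max_right _ _) hn)
      exact ⟨a, ha, by rw [abs_lt]; constructor <;> [linarith [hmem.1]; linarith [hmem.1]]⟩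
    · have hy' := hIcc_sub hy
      have hmem := iterate_mem_gap L.mono_i hFia hFib n y hy'
      have hge : L.Fi^[n] α ≤ L.Fi^[n] y := (L.iter_mono_i n).monotone hy.1
      have hgt := hN₁ n (le_trans (le_max_left _ _) hn)
      exact ⟨b, hb, by rw [abs_lt]; constructor <;> [linarith [hmem.2]; linarith [hmem.2]]⟩

end RHomeo
end Stmt5

namespace Stmt5
open Set Filter Topology
namespace RHomeo
variable (L : RHomeo)

lemma isOpen_near {ε : ℝ} : IsOpen {x | L.near ε x} := by
  have : {x | L.near ε x} = ⋃ a : L.A, Ioo ((a : ℝ) - ε) ((a : ℝ) + ε) := by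
    ext x
    simp only [near, mem_setOf_eq, mem_iUnion, mem_Ioo]
    constructor
    · rintro ⟨a, ha, hd⟩
      rw [abs_lt] at hd
      exact ⟨⟨a, ha⟩, by constructor <;> linarith⟩
    · rintro ⟨⟨a, ha⟩, h1, h2⟩
      exact ⟨a, ha, by rw [abs_lt]; constructor <;> linarith⟩
  rw [this]
  exact isOpen_iUnion fun a => isOpen_Ioo

lemma uniform (hA : L.A.Nonempty) {ε : ℝ} (hε : 0 < ε) :
    ∃ N : ℕ, 1 ≤ N ∧ ∀ x, ¬ L.near ε x → L.near ε (L.F^[N] x) ∧ L.near ε (L.Fi^[N] x) := by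
  obtain ⟨x₀, hx₀⟩ := hA
  set K : Set ℝ := Icc x₀ (x₀ + 1) ∩ {x | L.near ε x}ᶜ with hK
  have hKclosed : IsClosed K := isClosed_Icc.inter (L.isOpen_near).isClosed_compl
  have hKcpt : IsCompact K := isCompact_Icc.inter_right (L.isOpen_near).isClosed_compl
  have hKA : ∀ x ∈ K, x ∉ L.A := by
    rintro x ⟨-, hx⟩ hxA
    exact hx ⟨x, hxA, by simpa using hε⟩
  -- cover by gaps
  have hcover : K ⊆ ⋃ i : K, Ioo (L.ga i) (L.gb i) := by
    intro x hx
    exact mem_iUnion.mpr ⟨⟨x, hx⟩, L.mem_gap ⟨x₀, hx₀⟩ (hKA x hx)⟩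
  obtain ⟨t, ht⟩ := hKcpt.elim_finite_subcover (fun i : K => Ioo (L.ga i) (L.gb i))
    (fun i => isOpen_Ioo) hcover
  have hApiece : ∀ i : K, ∃ Ni, ∀ n ≥ Ni, ∀ y ∈ K ∩ Ioo (L.ga i) (L.gb i),
      L.near ε (L.F^[n] y) ∧ L.near ε (L.Fi^[n] y) := by
    intro i
    by_cases hne : (K ∩ Ioo (L.ga (i:ℝ)) (L.gb (i:ℝ))).Nonempty
    · set P : Set ℝ := K ∩ Icc (L.ga (i:ℝ)) (L.gb (i:ℝ)) with hP
      have hPne : P.Nonempty := by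
        obtain ⟨y, hy1, hy2⟩ := hne
        exact ⟨y, hy1, Ioo_subset_Icc_self hy2⟩
      have hPclosed : IsClosed P := hKclosed.inter isClosed_Icc
      have hPbdd_above : BddAbove P := ⟨L.gb (i:ℝ), fun y hy => hy.2.2⟩
      have hPbdd_below : BddBelow P := ⟨L.ga (i:ℝ), fun y hy => hy.2.1⟩
      set α := sInf P with hα
      set β := sSup P with hβ
      have hαP : α ∈ P := hPclosed.csInf_mem hPne hPbdd_below
      have hβP : β ∈ P := hPclosed.csSup_mem hPne hPbdd_above
      have hAne : L.A.Nonempty := ⟨x₀, hx₀⟩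
      have hgai : L.ga (i:ℝ) ∈ L.A := (L.ga_spec hAne (i:ℝ)).1
      have hgbi : L.gb (i:ℝ) ∈ L.A := (L.gb_spec hAne (i:ℝ)).1
      have hαIoo : α ∈ Ioo (L.ga (i:ℝ)) (L.gb (i:ℝ)) := by
        rcases hαP.2.1.lt_or_eq with h | h
        · rcases hαP.2.2.lt_or_eq with h2 | h2
          · exact ⟨h, h2⟩
          · exact absurd (h2 ▸ hgbi) (hKA _ hαP.1)
        · exact absurd (h ▸ hgai) (hKA _ hαP.1)
      have hβIoo : β ∈ Ioo (L.ga (i:ℝ)) (L.gb (i:ℝ)) := by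
        rcases hβP.2.1.lt_or_eq with h | h
        · rcases hβP.2.2.lt_or_eq with h2 | h2
          · exact ⟨h, h2⟩
          · exact absurd (h2 ▸ hgbi) (hKA _ hβP.1)
        · exact absurd (h ▸ hgai) (hKA _ hβP.1)
      have hgap : ∀ y ∈ Ioo (L.ga (i:ℝ)) (L.gb (i:ℝ)), y ∉ L.A := fun y hy => L.gap_no_fix y hy
      obtain ⟨N, hN⟩ := L.gap_uniform hAne hε hgai hgbi hgap hαIoo hβIoo
      refine ⟨N, fun n hn y hy => ?_⟩
      have hyIcc : y ∈ Icc α β := ⟨csInf_le hPbdd_below ⟨hy.1, Ioo_subset_Icc_self hy.2⟩,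
        le_csSup hPbdd_above ⟨hy.1, Ioo_subset_Icc_self hy.2⟩⟩
      exact hN n hn y hyIcc
    · exact ⟨0, fun n _ y hy => absurd ⟨y, hy⟩ hne⟩
  choose Nf hNf using hApiece
  classical
  set N : ℕ := t.sup Nf + 1 with hNdef
  refine ⟨N, by omega, ?_⟩
  -- first, points in the window
  have hwin : ∀ x ∈ K, L.near ε (L.F^[N] x) ∧ L.near ε (L.Fi^[N] x) := by
    intro x hx
    have := ht hx
    simp only [mem_iUnion] at this
    obtain ⟨i, hi, hxi⟩ := this
    refine hNf i N ?_ x ⟨hx, hxi⟩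
    have := Finset.le_sup (f := Nf) hi
    omega
  intro x hx
  set m : ℤ := ⌊x - x₀⌋ with hm
  set x' : ℝ := x - m with hx'
  have hx'mem : x' ∈ Icc x₀ (x₀ + 1) := by
    constructor
    · have := Int.floor_le (x - x₀); simp only [hx', hm]; linarith
    · have := Int.lt_floor_add_one (x - x₀); simp only [hx', hm]; linarith
  have hxeq : x = x' + m := by simp [hx']
  have hx'n : ¬ L.near ε x' := by
    intro h
    exact hx (by rw [hxeq]; exact L.near_add_int m h)
  have hx'K : x' ∈ K := ⟨hx'mem, hx'n⟩
  obtain ⟨h1, h2⟩ := hwin x' hx'K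
  constructor
  · rw [hxeq, L.iter_per_int]
    exact L.near_add_int m h1
  · rw [hxeq, show L.Fi^[N] (x' + m) = L.Fi^[N] x' + m from L.symm.iter_per_int N m x']
    exact L.near_add_int m h2

end RHomeo
end Stmt5

namespace Stmt5
open Set Filter Topology
namespace RHomeo
variable (L : RHomeo)

lemma iter_fix {x : ℝ} (hx : x ∈ L.A) (n : ℕ) : L.F^[n] x = x := by
  induction n with
  | zero => simp
  | succ k ih => rw [Function.iterate_succ_apply', ih]; exact hx

lemma iter_fix_i {x : ℝ} (hx : x ∈ L.A) (n : ℕ) : L.Fi^[n] x = x := by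
  induction n with
  | zero => simp
  | succ k ih => rw [Function.iterate_succ_apply', ih]; exact L.fix_i hx

/-- The attracting ping-pong set. -/
def XS (ε : ℝ) : Set ℝ :=
  L.A ∪ {x | x ∉ L.A ∧ (L.gb x - L.ga x < 2*ε ∨ (x < L.F x ∧ L.gb x - x < ε) ∨
    (L.F x < x ∧ x - L.ga x < ε))}

/-- The repelling ping-pong set. -/
def YS (ε : ℝ) : Set ℝ :=
  {x | x ∉ L.A ∧ 2*ε ≤ L.gb x - L.ga x ∧ ((x < L.F x ∧ x - L.ga x < ε) ∨
    (L.F x < x ∧ L.gb x - x < ε))}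

variable (hA : L.A.Nonempty)
include hA

lemma XS_near {ε x : ℝ} (hε : 0 < ε) (hx : x ∈ L.XS ε) : ∃ a ∈ L.A, |x - a| < ε := by
  rcases hx with hx | ⟨hxA, hx⟩
  · exact ⟨x, hx, by simpa using hε⟩
  · have hgap := L.mem_gap hA hxA
    have hga := (L.ga_spec hA x).1
    have hgb := (L.gb_spec hA x).1
    rcases hx with h | h | h
    · rcases le_total (x - L.ga x) (L.gb x - x) with hc | hc
      · exact ⟨L.ga x, hga, by rw [abs_lt]; constructor <;> [linarith [hgap.1]; linarith]⟩
      · exact ⟨L.gb x, hgb, by rw [abs_lt]; constructor <;> [linarith; linarith [hgap.2]]⟩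
    · exact ⟨L.gb x, hgb, by rw [abs_lt]; constructor <;> [linarith [hgap.2]; linarith [hgap.2]]⟩
    · exact ⟨L.ga x, hga, by rw [abs_lt]; constructor <;> [linarith [hgap.1]; linarith [hgap.1]]⟩

lemma YS_near {ε x : ℝ} (hx : x ∈ L.YS ε) : ∃ a ∈ L.A, |x - a| < ε := by
  obtain ⟨hxA, hbig, hs⟩ := hx
  have hgap := L.mem_gap hA hxA
  rcases hs with h | h
  · exact ⟨L.ga x, (L.ga_spec hA x).1, by rw [abs_lt]; constructor <;> [linarith [hgap.1]; linarith [hgap.1]]⟩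
  · exact ⟨L.gb x, (L.gb_spec hA x).1, by rw [abs_lt]; constructor <;> [linarith [hgap.2]; linarith [hgap.2]]⟩

omit hA

lemma XS_YS_disjoint {ε : ℝ} : ∀ x, x ∈ L.XS ε → x ∈ L.YS ε → False := by
  rintro x hX ⟨hxA, hbig, hsY⟩
  rcases hX with hx | ⟨-, hsX⟩
  · exact hxA hx
  rcases hsX with h | h | h
  · linarith
  · rcases hsY with h2 | h2
    · linarith
    · linarith
  · rcases hsY with h2 | h2
    · linarith
    · linarith

lemma XS_add_int {ε x : ℝ} (m : ℤ) (hA : L.A.Nonempty) (hx : x ∈ L.XS ε) :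
    x + m ∈ L.XS ε := by
  rcases hx with hx | ⟨hxA, hs⟩
  · exact Or.inl (L.A_add_int hx m)
  · refine Or.inr ⟨fun h => hxA ?_, ?_⟩
    · have := L.A_add_int h (-m)
      rwa [show x + m + ((-m : ℤ) : ℝ) = x by push_cast; ring] at this
    · rw [L.ga_add_int x m hA, L.gb_add_int x m hA, L.per_int]
      rcases hs with h | h | h
      · exact Or.inl (by linarith)
      · exact Or.inr (Or.inl ⟨by linarith, by linarith⟩)
      · exact Or.inr (Or.inr ⟨by linarith, by linarith⟩)

lemma YS_add_int {ε x : ℝ} (m : ℤ) (hA : L.A.Nonempty) (hx : x ∈ L.YS ε) :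
    x + m ∈ L.YS ε := by
  obtain ⟨hxA, hbig, hs⟩ := hx
  refine ⟨fun h => hxA ?_, ?_, ?_⟩
  · have := L.A_add_int h (-m)
    rwa [show x + m + ((-m : ℤ) : ℝ) = x by push_cast; ring] at this
  · rw [L.ga_add_int x m hA, L.gb_add_int x m hA]; linarith
  · rw [L.ga_add_int x m hA, L.gb_add_int x m hA, L.per_int]
    rcases hs with h | h
    · exact Or.inl ⟨by linarith, by linarith⟩
    · exact Or.inr ⟨by linarith, by linarith⟩

/-- not `near` from being far from both gap endpoints -/
lemma not_near_of_far (hA : L.A.Nonempty) {ε x : ℝ} (hxA : x ∉ L.A)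
    (h1 : ε ≤ x - L.ga x) (h2 : ε ≤ L.gb x - x) : ¬ L.near ε x := by
  rintro ⟨c, hc, hdist⟩
  rcases le_total c x with h | h
  · have : c ≤ L.ga x := le_csSup ⟨x, fun z hz => hz.2⟩ ⟨hc, h⟩
    rw [abs_lt] at hdist
    linarith
  · have : L.gb x ≤ c := csInf_le ⟨x, fun z hz => hz.2⟩ ⟨hc, h⟩
    rw [abs_lt] at hdist
    linarith

lemma orbit_ge {a b x : ℝ} (ha : L.F a = a) (hb : L.F b = b)
    (hsg : ∀ y ∈ Ioo a b, y < L.F y) (hx : x ∈ Ioo a b) (n : ℕ) : x ≤ L.F^[n] x := by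
  induction n with
  | zero => simp
  | succ k ih =>
    rw [Function.iterate_succ_apply']
    have hmem := iterate_mem_gap L.mono ha hb k x hx
    exact le_trans ih (hsg _ hmem).le

lemma orbit_le {a b x : ℝ} (ha : L.F a = a) (hb : L.F b = b)
    (hsg : ∀ y ∈ Ioo a b, L.F y < y) (hx : x ∈ Ioo a b) (n : ℕ) : L.F^[n] x ≤ x := by
  induction n with
  | zero => simp
  | succ k ih =>
    rw [Function.iterate_succ_apply']
    have hmem := iterate_mem_gap L.mono ha hb k x hx
    exact le_trans (hsg _ hmem).le ih

end RHomeo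
end Stmt5

namespace Stmt5
open Set Filter Topology
namespace RHomeo
variable (L : RHomeo)

lemma sign_gap_neg {a b : ℝ} (hgap : ∀ y ∈ Ioo a b, y ∉ L.A) {x : ℝ} (hx : x ∈ Ioo a b)
    (hFx : L.F x < x) : ∀ y ∈ Ioo a b, L.F y < y := by
  intro y hy
  by_contra hcon
  push_neg at hcon
  have h2 : y < L.F y := lt_of_le_of_ne hcon (fun h => hgap y hy h.symm)
  have := L.sign_gap hgap hy h2 x hx
  linarith

lemma key_forward (hA : L.A.Nonempty) {ε : ℝ} (hε : 0 < ε) {N : ℕ}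
    (hN : ∀ x, ¬ L.near ε x → L.near ε (L.F^[N] x) ∧ L.near ε (L.Fi^[N] x)) :
    ∀ x, x ∉ L.YS ε → L.F^[N] x ∈ L.XS ε := by
  intro x hx
  by_cases hxA : x ∈ L.A
  · rw [L.iter_fix hxA]; exact Or.inl hxA
  set a := L.ga x with hadef
  set b := L.gb x with hbdef
  have hgap := L.mem_gap hA hxA
  have ha : a ∈ L.A := (L.ga_spec hA x).1
  have hb : b ∈ L.A := (L.gb_spec hA x).1
  have hgapA : ∀ y ∈ Ioo a b, y ∉ L.A := fun y hy => L.gap_no_fix y hy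
  set x' := L.F^[N] x with hx'def
  have hx'mem : x' ∈ Ioo a b := iterate_mem_gap L.mono ha hb N x hgap
  have hx'A : x' ∉ L.A := hgapA _ hx'mem
  have hgeq := L.gap_eq hA hx'mem
  have hne : L.F x ≠ x := hxA
  by_cases hsmall : b - a < 2*ε
  · exact Or.inr ⟨hx'A, by rw [hgeq.1, hgeq.2]; exact Or.inl hsmall⟩
  push_neg at hsmall
  rcases hne.lt_or_gt with hneg | hpos
  · -- decreasing case
    have hsg : ∀ y ∈ Ioo a b, L.F y < y := L.sign_gap_neg hgapA hgap hneg
    have hx'sign : L.F x' < x' := hsg _ hx'mem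
    have hxle : x' ≤ x := L.orbit_le ha hb hsg hgap N
    have hnbx : ¬ (b - x < ε) := fun h => hx ⟨hxA, by rw [← hadef, ← hbdef]; exact hsmall,
      Or.inr ⟨hneg, h⟩⟩
    push_neg at hnbx
    by_cases h1 : x - a < ε
    · exact Or.inr ⟨hx'A, by rw [hgeq.1, hgeq.2]; exact Or.inr (Or.inr ⟨hx'sign, by linarith⟩)⟩
    · push_neg at h1
      have hnear := (hN x (L.not_near_of_far hA hxA h1 hnbx)).1
      obtain ⟨c, hc, hd⟩ := hnear
      rw [abs_lt] at hd
      have hcout : c ≤ a ∨ b ≤ c := by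
        by_contra hcon
        push_neg at hcon
        exact hgapA c ⟨hcon.1, hcon.2⟩ hc
      rcases hcout with hca | hcb
      · exact Or.inr ⟨hx'A, by rw [hgeq.1, hgeq.2]; exact Or.inr (Or.inr ⟨hx'sign, by linarith⟩)⟩
      · exfalso
        have : ε ≤ c - x' := by linarith [hx'mem.2]
        linarith
  · -- increasing case
    have hsg : ∀ y ∈ Ioo a b, y < L.F y := L.sign_gap hgapA hgap hpos
    have hx'sign : x' < L.F x' := hsg _ hx'mem
    have hxle : x ≤ x' := L.orbit_ge ha hb hsg hgap N
    have hnxa : ¬ (x - a < ε) := fun h => hx ⟨hxA, by rw [← hadef, ← hbdef]; exact hsmall,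
      Or.inl ⟨hpos, h⟩⟩
    push_neg at hnxa
    by_cases h1 : b - x < ε
    · exact Or.inr ⟨hx'A, by rw [hgeq.1, hgeq.2]; exact Or.inr (Or.inl ⟨hx'sign, by linarith⟩)⟩
    · push_neg at h1
      have hnear := (hN x (L.not_near_of_far hA hxA hnxa h1)).1
      obtain ⟨c, hc, hd⟩ := hnear
      rw [abs_lt] at hd
      have hcout : c ≤ a ∨ b ≤ c := by
        by_contra hcon
        push_neg at hcon
        exact hgapA c ⟨hcon.1, hcon.2⟩ hc
      rcases hcout with hca | hcb
      · exfalso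
        have : ε ≤ x' - c := by linarith
        linarith
      · exact Or.inr ⟨hx'A, by rw [hgeq.1, hgeq.2]; exact Or.inr (Or.inl ⟨hx'sign, by linarith⟩)⟩

lemma key_backward (hA : L.A.Nonempty) {ε : ℝ} (hε : 0 < ε) {N : ℕ}
    (hN : ∀ x, ¬ L.near ε x → L.near ε (L.F^[N] x) ∧ L.near ε (L.Fi^[N] x)) :
    ∀ x, x ∉ L.XS ε → L.Fi^[N] x ∈ L.YS ε := by
  intro x hx
  have hxA : x ∉ L.A := fun h => hx (Or.inl h)
  set a := L.ga x with hadef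
  set b := L.gb x with hbdef
  have hgap := L.mem_gap hA hxA
  have ha : a ∈ L.A := (L.ga_spec hA x).1
  have hb : b ∈ L.A := (L.gb_spec hA x).1
  have hia : L.Fi a = a := L.fix_i ha
  have hib : L.Fi b = b := L.fix_i hb
  have hgapA : ∀ y ∈ Ioo a b, y ∉ L.A := fun y hy => L.gap_no_fix y hy
  set x' := L.Fi^[N] x with hx'def
  have hx'mem : x' ∈ Ioo a b := iterate_mem_gap L.mono_i hia hib N x hgap
  have hx'A : x' ∉ L.A := hgapA _ hx'mem
  have hgeq := L.gap_eq hA hx'mem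
  have hclauses : ¬ (b - a < 2*ε ∨ (x < L.F x ∧ b - x < ε) ∨ (L.F x < x ∧ x - a < ε)) :=
    fun h => hx (Or.inr ⟨hxA, h⟩)
  push_neg at hclauses
  obtain ⟨hbig, hnp, hnn⟩ := hclauses
  have hne : L.F x ≠ x := hxA
  have hstep : ∀ y ∈ Ioo a b, L.F y ∈ Ioo a b := by
    intro y hy
    exact ⟨by have := L.mono hy.1; rwa [show L.F a = a from ha] at this,
           by have := L.mono hy.2; rwa [show L.F b = b from hb] at this⟩
  have hstep_i : ∀ y ∈ Ioo a b, L.Fi y ∈ Ioo a b := by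
    intro y hy
    exact ⟨by have := L.mono_i hy.1; rwa [hia] at this,
           by have := L.mono_i hy.2; rwa [hib] at this⟩
  rcases hne.lt_or_gt with hneg | hpos
  · -- F decreasing on gap, so Fi increasing
    have hsg : ∀ y ∈ Ioo a b, L.F y < y := L.sign_gap_neg hgapA hgap hneg
    have hsgi : ∀ y ∈ Ioo a b, y < L.Fi y := by
      intro y hy
      have := hsg _ (hstep_i y hy)
      rwa [L.ri] at this
    have hx'sign : L.F x' < x' := hsg _ hx'mem
    have hxge : x ≤ x' := L.symm.orbit_ge hia hib hsgi hgap N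
    have h1 : ε ≤ x - a := hnn hneg
    by_cases h2 : b - x < ε
    · exact ⟨hx'A, by rw [hgeq.1, hgeq.2]; exact hbig,
        by rw [hgeq.1, hgeq.2]; exact Or.inr ⟨hx'sign, by linarith⟩⟩
    · push_neg at h2
      have hnear := (hN x (L.not_near_of_far hA hxA h1 h2)).2
      obtain ⟨c, hc, hd⟩ := hnear
      rw [abs_lt] at hd
      have hcout : c ≤ a ∨ b ≤ c := by
        by_contra hcon
        push_neg at hcon
        exact hgapA c ⟨hcon.1, hcon.2⟩ hc
      rcases hcout with hca | hcb
      · exfalso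
        have : ε ≤ x' - c := by linarith
        linarith
      · exact ⟨hx'A, by rw [hgeq.1, hgeq.2]; exact hbig,
          by rw [hgeq.1, hgeq.2]; exact Or.inr ⟨hx'sign, by linarith⟩⟩
  · -- F increasing on gap, so Fi decreasing
    have hsg : ∀ y ∈ Ioo a b, y < L.F y := L.sign_gap hgapA hgap hpos
    have hsgi : ∀ y ∈ Ioo a b, L.Fi y < y := by
      intro y hy
      have := hsg _ (hstep_i y hy)
      rwa [L.ri] at this
    have hx'sign : x' < L.F x' := hsg _ hx'mem
    have hxle : x' ≤ x := L.symm.orbit_le hia hib hsgi hgap N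
    have h2 : ε ≤ b - x := hnp hpos
    by_cases h1 : x - a < ε
    · exact ⟨hx'A, by rw [hgeq.1, hgeq.2]; exact hbig,
        by rw [hgeq.1, hgeq.2]; exact Or.inl ⟨hx'sign, by linarith⟩⟩
    · push_neg at h1
      have hnear := (hN x (L.not_near_of_far hA hxA h1 h2)).2
      obtain ⟨c, hc, hd⟩ := hnear
      rw [abs_lt] at hd
      have hcout : c ≤ a ∨ b ≤ c := by
        by_contra hcon
        push_neg at hcon
        exact hgapA c ⟨hcon.1, hcon.2⟩ hc
      rcases hcout with hca | hcb
      · exact ⟨hx'A, by rw [hgeq.1, hgeq.2]; exact hbig,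
          by rw [hgeq.1, hgeq.2]; exact Or.inl ⟨hx'sign, by linarith⟩⟩
      · exfalso
        have : ε ≤ c - x' := by linarith [hx'mem.2]
        linarith

end RHomeo
end Stmt5

namespace Stmt5
open Set Filter Topology

lemma per_int_of {F : ℝ → ℝ} (hp : ∀ x, F (x + 1) = F x + 1) :
    ∀ (m : ℤ) (x : ℝ), F (x + m) = F x + m := by
  have hnat : ∀ (n : ℕ) (x : ℝ), F (x + n) = F x + n := by
    intro n
    induction n with
    | zero => simp
    | succ k ih =>
      intro x
      push_cast
      rw [show x + ((k:ℝ)+1) = (x + k) + 1 by ring, hp, ih x]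
      ring
  intro m x
  cases m with
  | ofNat n => simpa using hnat n x
  | negSucc n =>
      have := hnat (n+1) (x + Int.negSucc n)
      rw [show (x + (Int.negSucc n : ℝ) + ((n+1:ℕ):ℝ) : ℝ) = x by
        simp [Int.negSucc_eq]; push_cast; ring] at this
      push_cast [Int.negSucc_eq] at this ⊢
      linarith

/-- From a positive homeomorphism with a fixed point, construct a bundled lift with a
fixed point of the lift itself. -/
lemma exists_rhomeo {f : Equiv.Perm S1} (hf : IsPosHomeo f) (hfix : ∃ s : S1, f s = s) :
    ∃ L : RHomeo, (∀ x : ℝ, f ((x : ℝ) : S1) = ((L.F x : ℝ) : S1)) ∧ L.A.Nonempty := by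
  obtain ⟨F, hm, hc, hp, he⟩ := hf
  obtain ⟨s, hs⟩ := hfix
  obtain ⟨x₀, rfl⟩ := coe_surj s
  have h1 : ((F x₀ : ℝ) : S1) = ((x₀ : ℝ) : S1) := by rw [← he]; exact hs
  obtain ⟨m, hm0⟩ := coe_eq_coe.mp h1
  set F' : ℝ → ℝ := fun t => F t - m with hF'
  have hm' : StrictMono F' := fun x y h => by simp only [hF']; linarith [hm h]
  have hc' : Continuous F' := hc.sub continuous_const
  have hp' : ∀ x, F' (x + 1) = F' x + 1 := fun x => by simp only [hF', hp]; ring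
  have he' : ∀ x : ℝ, f ((x : ℝ) : S1) = ((F' x : ℝ) : S1) := by
    intro x
    rw [he x]
    have : F x = F' x + (m : ℤ) := by simp [hF']
    rw [this, coe_add_int]
  have hfix' : F' x₀ = x₀ := by simp only [hF']; linarith
  -- surjectivity
  have hsurj : Function.Surjective F' := by
    intro y
    set n : ℤ := ⌈|y - F' 0|⌉ with hn
    have hn0 : (0:ℤ) ≤ n := Int.ceil_nonneg (abs_nonneg _)
    have habs : |y - F' 0| ≤ (n : ℝ) := Int.le_ceil _
    rw [abs_le] at habs
    have hlow : F' ((-n : ℤ) : ℝ) ≤ y := by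
      have : F' (0 + ((-n : ℤ) : ℝ)) = F' 0 + ((-n : ℤ) : ℝ) := per_int_of hp' (-n) 0
      rw [zero_add] at this
      rw [this]; push_cast; linarith
    have hhigh : y ≤ F' ((n : ℤ) : ℝ) := by
      have : F' (0 + ((n : ℤ) : ℝ)) = F' 0 + ((n : ℤ) : ℝ) := per_int_of hp' n 0
      rw [zero_add] at this
      rw [this]; push_cast; linarith
    have hle : ((-n : ℤ) : ℝ) ≤ ((n : ℤ) : ℝ) := by
      have h0 : (0:ℝ) ≤ (n:ℝ) := by exact_mod_cast hn0
      push_cast; linarith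
    obtain ⟨x, _, hx⟩ := intermediate_value_Icc hle hc'.continuousOn ⟨hlow, hhigh⟩
    exact ⟨x, hx⟩
  set Fi : ℝ → ℝ := Function.surjInv hsurj with hFi
  have hri : ∀ x, F' (Fi x) = x := fun x => Function.surjInv_eq hsurj x
  have hli : ∀ x, Fi (F' x) = x := fun x => hm'.injective (by rw [hri])
  refine ⟨⟨F', Fi, hm', hc', hp', hli, hri⟩, he', ⟨x₀, hfix'⟩⟩

/-- Equivariance for iterates. -/
lemma equivariant_iter {f : Equiv.Perm S1} {L : RHomeo}
    (he : ∀ x : ℝ, f ((x : ℝ) : S1) = ((L.F x : ℝ) : S1)) (n : ℕ) (x : ℝ) :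
    (f ^ n) ((x : ℝ) : S1) = ((L.F^[n] x : ℝ) : S1) := by
  induction n generalizing x with
  | zero => simp
  | succ k ih =>
    rw [pow_succ, Equiv.Perm.mul_apply, he x, Function.iterate_succ_apply]
    exact ih (L.F x)

lemma equivariant_inv {f : Equiv.Perm S1} {L : RHomeo}
    (he : ∀ x : ℝ, f ((x : ℝ) : S1) = ((L.F x : ℝ) : S1)) (x : ℝ) :
    f⁻¹ ((x : ℝ) : S1) = ((L.Fi x : ℝ) : S1) := by
  have h1 : f ((L.Fi x : ℝ) : S1) = ((x : ℝ) : S1) := by rw [he (L.Fi x), L.ri]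
  rw [← h1]
  exact (f.symm_apply_apply _)

end Stmt5

namespace Stmt5
open Set Filter Topology

/-- The projection `ℝ → S¹`. -/
noncomputable def pr (x : ℝ) : S1 := ((x : ℝ) : S1)

lemma pr_eq_iff {x y : ℝ} : pr x = pr y ↔ ∃ m : ℤ, x - y = m := coe_eq_coe

/-- Separation of two disjoint closed nonempty 1-periodic sets. -/
lemma sep {A B : Set ℝ} (hAcl : IsClosed A) (hBcl : IsClosed B) (hAne : A.Nonempty)
    (hBne : B.Nonempty) (hAper : ∀ x ∈ A, ∀ m : ℤ, x + m ∈ A)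
    (hBper : ∀ x ∈ B, ∀ m : ℤ, x + m ∈ B) (hdisj : ∀ x, x ∈ A → x ∈ B → False) :
    ∃ d > 0, ∀ a ∈ A, ∀ b ∈ B, d ≤ |a - b| := by
  set W : Set ℝ := A ∩ Icc 0 1 with hW
  have hWcpt : IsCompact W := (isCompact_Icc).inter_left hAcl
  have hWne : W.Nonempty := by
    obtain ⟨a₀, ha₀⟩ := hAne
    refine ⟨a₀ + ((-⌊a₀⌋ : ℤ) : ℝ), hAper a₀ ha₀ _, ?_⟩
    constructor
    · push_cast
      have := Int.floor_le a₀; linarith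
    · push_cast
      have := Int.lt_floor_add_one a₀; linarith
  have hcont : ContinuousOn (fun x => Metric.infDist x B) W :=
    (Metric.continuous_infDist_pt B).continuousOn
  obtain ⟨a₀, ha₀W, hmin⟩ := hWcpt.exists_isMinOn hWne hcont
  set d : ℝ := Metric.infDist a₀ B with hd
  have hd0 : 0 < d := by
    rw [hd, ← (hBcl.notMem_iff_infDist_pos hBne : a₀ ∉ B ↔ _)]
    exact fun h => hdisj a₀ ha₀W.1 h
  refine ⟨d, hd0, fun a ha b hb => ?_⟩
  set a' : ℝ := a + ((-⌊a⌋ : ℤ) : ℝ) with ha'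
  set b' : ℝ := b + ((-⌊a⌋ : ℤ) : ℝ) with hb'
  have ha'W : a' ∈ W := by
    refine ⟨hAper a ha _, ?_, ?_⟩
    · simp only [ha']; push_cast
      have := Int.floor_le a; linarith
    · simp only [ha']; push_cast
      have := Int.lt_floor_add_one a; linarith
  have hb'B : b' ∈ B := hBper b hb _
  have h1 : d ≤ Metric.infDist a' B := hmin ha'W
  have h2 : Metric.infDist a' B ≤ dist a' b' := Metric.infDist_le_dist_of_mem hb'B
  have h3 : dist a' b' = |a - b| := by
    rw [Real.dist_eq]
    congr 1
    simp only [ha', hb']; ring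
  linarith

lemma image_compl_sat {S : Set ℝ} (hsat : ∀ x ∈ S, ∀ m : ℤ, x + m ∈ S) :
    (pr '' S)ᶜ = pr '' Sᶜ := by
  ext s
  obtain ⟨x, rfl⟩ := coe_surj s
  show (pr x ∈ (pr '' S)ᶜ) ↔ _
  constructor
  · intro h
    refine ⟨x, fun hxS => h ⟨x, hxS, rfl⟩, rfl⟩
  · rintro ⟨y, hy, heq⟩ hmem
    obtain ⟨z, hz, hzeq⟩ := hmem
    have h1 : ∃ m : ℤ, z - y = m := pr_eq_iff.mp (by rw [heq, hzeq]; rfl)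
    obtain ⟨m, hm⟩ := h1
    refine hy ?_
    have := hsat z hz (-m)
    rwa [show z + ((-m : ℤ) : ℝ) = y by push_cast; linarith] at this

lemma disjoint_image {S T : Set ℝ} (hsatT : ∀ x ∈ T, ∀ m : ℤ, x + m ∈ T)
    (h : ∀ x, x ∈ S → x ∈ T → False) : Disjoint (pr '' S) (pr '' T) := by
  rw [Set.disjoint_left]
  rintro s ⟨x, hx, rfl⟩ ⟨y, hy, heq⟩
  obtain ⟨m, hm⟩ := pr_eq_iff.mp heq
  have := hsatT y hy (-m)
  rw [show y + ((-m : ℤ) : ℝ) = x by push_cast; linarith] at this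
  exact h x hx this

end Stmt5

namespace Stmt5
open Set Filter Topology

open Pointwise in
lemma free_of_no_common_fix (G : Subgroup (Equiv.Perm S1)) {f g : Equiv.Perm S1}
    (hfG : f ∈ G) (hgG : g ∈ G) (hfp : IsPosHomeo f) (hgp : IsPosHomeo g)
    (hffix : ∃ s : S1, f s = s) (hgfix : ∃ s : S1, g s = s)
    (hncom : ∀ s : S1, ¬ (f s = s ∧ g s = s)) : HasFreeSubgroup G := by
  classical
  obtain ⟨Lf, hef, hAf⟩ := exists_rhomeo hfp hffix
  obtain ⟨Lg, heg, hAg⟩ := exists_rhomeo hgp hgfix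
  have hsatA : ∀ x ∈ Lf.A, ∀ m : ℤ, x + m ∈ Lf.A := fun x hx m => Lf.A_add_int hx m
  have hsatB : ∀ x ∈ Lg.A, ∀ m : ℤ, x + m ∈ Lg.A := fun x hx m => Lg.A_add_int hx m
  have hABdisj : ∀ x, x ∈ Lf.A → x ∈ Lg.A → False := by
    intro x hx1 hx2
    refine hncom (pr x) ⟨?_, ?_⟩
    · show f ((x : ℝ) : S1) = _
      rw [hef x, show Lf.F x = x from hx1]; rfl
    · show g ((x : ℝ) : S1) = _
      rw [heg x, show Lg.F x = x from hx2]; rfl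
  obtain ⟨d, hd0, hdAB⟩ := sep Lf.isClosed_A Lg.isClosed_A hAf hAg hsatA hsatB hABdisj
  set ε : ℝ := d / 3 with hεdef
  have hε : 0 < ε := by positivity
  obtain ⟨N₁, hN₁ge, hN₁⟩ := Lf.uniform hAf hε
  obtain ⟨N₂, hN₂ge, hN₂⟩ := Lg.uniform hAg hε
  have hcross : ∀ x, (∃ a ∈ Lf.A, |x - a| < ε) → (∃ b ∈ Lg.A, |x - b| < ε) → False := by
    rintro x ⟨a, ha, hxa⟩ ⟨b, hb, hxb⟩
    have h1 : d ≤ |a - b| := hdAB a ha b hb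
    have h2 : |a - b| ≤ |a - x| + |x - b| := abs_sub_le a x b
    rw [abs_sub_comm a x] at h2
    linarith
  -- saturation of the four sets
  have hsatXf : ∀ x ∈ Lf.XS ε, ∀ m : ℤ, x + m ∈ Lf.XS ε := fun x hx m => Lf.XS_add_int m hAf hx
  have hsatYf : ∀ x ∈ Lf.YS ε, ∀ m : ℤ, x + m ∈ Lf.YS ε := fun x hx m => Lf.YS_add_int m hAf hx
  have hsatXg : ∀ x ∈ Lg.XS ε, ∀ m : ℤ, x + m ∈ Lg.XS ε := fun x hx m => Lg.XS_add_int m hAg hx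
  have hsatYg : ∀ x ∈ Lg.YS ε, ∀ m : ℤ, x + m ∈ Lg.YS ε := fun x hx m => Lg.YS_add_int m hAg hx
  -- the generators and ping-pong sets
  set a : Fin 2 → Equiv.Perm S1 := ![f ^ N₁, g ^ N₂] with hadef
  set X : Fin 2 → Set S1 := ![pr '' Lf.XS ε, pr '' Lg.XS ε] with hXdef
  set Y : Fin 2 → Set S1 := ![pr '' Lf.YS ε, pr '' Lg.YS ε] with hYdef
  have hfin : ∀ i : Fin 2, i = 0 ∨ i = 1 := by decide
  have h10 : (1 : Fin 2) ≠ 0 := by decide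
  -- nonemptiness
  have hXne : ∀ i, (X i).Nonempty := by
    intro i
    rcases hfin i with rfl | rfl
    · obtain ⟨x₀, hx₀⟩ := hAf
      exact ⟨pr x₀, ⟨x₀, Or.inl hx₀, rfl⟩⟩
    · obtain ⟨x₀, hx₀⟩ := hAg
      simp only [hXdef, Matrix.cons_val_zero, Matrix.cons_val_one, Matrix.head_cons]
      exact ⟨pr x₀, ⟨x₀, Or.inl hx₀, rfl⟩⟩
  -- disjointness across f and g sets
  have hXfXg : Disjoint (pr '' Lf.XS ε) (pr '' Lg.XS ε) :=
    disjoint_image hsatXg (fun x h1 h2 => hcross x (Lf.XS_near hAf hε h1) (Lg.XS_near hAg hε h2))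
  have hYfYg : Disjoint (pr '' Lf.YS ε) (pr '' Lg.YS ε) :=
    disjoint_image hsatYg (fun x h1 h2 => hcross x (Lf.YS_near hAf h1) (Lg.YS_near hAg h2))
  have hXfYg : Disjoint (pr '' Lf.XS ε) (pr '' Lg.YS ε) :=
    disjoint_image hsatYg (fun x h1 h2 => hcross x (Lf.XS_near hAf hε h1) (Lg.YS_near hAg h2))
  have hXgYf : Disjoint (pr '' Lg.XS ε) (pr '' Lf.YS ε) :=
    disjoint_image hsatYf (fun x h1 h2 => hcross x (Lf.YS_near hAf h2) (Lg.XS_near hAg hε h1))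
  have hXfYf : Disjoint (pr '' Lf.XS ε) (pr '' Lf.YS ε) :=
    disjoint_image hsatYf (fun x h1 h2 => Lf.XS_YS_disjoint x h1 h2)
  have hXgYg : Disjoint (pr '' Lg.XS ε) (pr '' Lg.YS ε) :=
    disjoint_image hsatYg (fun x h1 h2 => Lg.XS_YS_disjoint x h1 h2)
  have hXdisj : Pairwise (Function.onFun Disjoint X) := by
    intro i j hij
    rcases hfin i with rfl | rfl <;> rcases hfin j with rfl | rfl
    · exact absurd rfl hij
    · simpa only [hXdef, Function.onFun, if_pos rfl, Matrix.cons_val_zero, Matrix.cons_val_one, Matrix.head_cons] using hXfXg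
    · simpa only [hXdef, Function.onFun, if_pos rfl, Matrix.cons_val_zero, Matrix.cons_val_one, Matrix.head_cons] using hXfXg.symm
    · exact absurd rfl hij
  have hYdisj : Pairwise (Function.onFun Disjoint Y) := by
    intro i j hij
    rcases hfin i with rfl | rfl <;> rcases hfin j with rfl | rfl
    · exact absurd rfl hij
    · simpa only [hYdef, Function.onFun, if_pos rfl, Matrix.cons_val_zero, Matrix.cons_val_one, Matrix.head_cons] using hYfYg
    · simpa only [hYdef, Function.onFun, if_pos rfl, Matrix.cons_val_zero, Matrix.cons_val_one, Matrix.head_cons] using hYfYg.symm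
    · exact absurd rfl hij
  have hXYdisj : ∀ i j, Disjoint (X i) (Y j) := by
    intro i j
    rcases hfin i with rfl | rfl <;> rcases hfin j with rfl | rfl <;>
      simp only [hXdef, hYdef, if_pos rfl, Matrix.cons_val_zero, Matrix.cons_val_one, Matrix.head_cons]
    · exact hXfYf
    · exact hXfYg
    · exact hXgYf
    · exact hXgYg
  have hX : ∀ i, a i • (Y i)ᶜ ⊆ X i := by
    intro i
    rcases hfin i with rfl | rfl
    · simp only [hadef, hXdef, hYdef, Matrix.cons_val_zero, Matrix.cons_val_one, Matrix.head_cons]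
      rw [image_compl_sat hsatYf]
      rintro s hs
      rw [Set.mem_smul_set] at hs
      obtain ⟨t, ⟨x, hx, rfl⟩, rfl⟩ := hs
      rw [Equiv.Perm.smul_def, show pr x = ((x : ℝ) : S1) from rfl, equivariant_iter hef N₁ x]
      exact ⟨_, Lf.key_forward hAf hε hN₁ x hx, rfl⟩
    · simp only [hadef, hXdef, hYdef, Matrix.cons_val_zero, Matrix.cons_val_one, Matrix.head_cons]
      rw [image_compl_sat hsatYg]
      rintro s hs
      rw [Set.mem_smul_set] at hs
      obtain ⟨t, ⟨x, hx, rfl⟩, rfl⟩ := hs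
      rw [Equiv.Perm.smul_def, show pr x = ((x : ℝ) : S1) from rfl, equivariant_iter heg N₂ x]
      exact ⟨_, Lg.key_forward hAg hε hN₂ x hx, rfl⟩
  have hY : ∀ i, a⁻¹ i • (X i)ᶜ ⊆ Y i := by
    intro i
    rcases hfin i with rfl | rfl
    · simp only [hadef, hXdef, hYdef, Pi.inv_apply, Matrix.cons_val_zero, Matrix.cons_val_one, Matrix.head_cons]
      rw [image_compl_sat hsatXf]
      rintro s hs
      rw [Set.mem_smul_set] at hs
      obtain ⟨t, ⟨x, hx, rfl⟩, rfl⟩ := hs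
      rw [Equiv.Perm.smul_def, show pr x = ((x : ℝ) : S1) from rfl, ← inv_pow,
        equivariant_iter (L := Lf.symm) (fun y => equivariant_inv hef y) N₁ x]
      exact ⟨_, Lf.key_backward hAf hε hN₁ x hx, rfl⟩
    · simp only [hadef, hXdef, hYdef, Pi.inv_apply, Matrix.cons_val_zero, Matrix.cons_val_one, Matrix.head_cons]
      rw [image_compl_sat hsatXg]
      rintro s hs
      rw [Set.mem_smul_set] at hs
      obtain ⟨t, ⟨x, hx, rfl⟩, rfl⟩ := hs
      rw [Equiv.Perm.smul_def, show pr x = ((x : ℝ) : S1) from rfl, ← inv_pow,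
        equivariant_iter (L := Lg.symm) (fun y => equivariant_inv heg y) N₂ x]
      exact ⟨_, Lg.key_backward hAg hε hN₂ x hx, rfl⟩
  have hinj : Function.Injective (FreeGroup.lift a) :=
    FreeGroup.injective_lift_of_ping_pong a X Y hXne hXdisj hYdisj hXYdisj hX hY
  refine ⟨FreeGroup.lift a, hinj, ?_⟩
  intro w
  refine FreeGroup.induction_on w ?_ ?_ ?_ ?_
  · rw [map_one]; exact one_mem G
  · intro i
    rw [FreeGroup.lift_apply_of]
    rcases hfin i with rfl | rfl
    · simp only [hadef, Matrix.cons_val_zero, Matrix.cons_val_one, Matrix.head_cons]; exact pow_mem hfG N₁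
    · simp only [hadef, Matrix.cons_val_zero, Matrix.cons_val_one, Matrix.head_cons]; exact pow_mem hgG N₂
  · intro i hi
    rw [map_inv]; exact inv_mem hi
  · intro x y hx hy
    rw [map_mul]; exact mul_mem hx hy

end Stmt5

open Stmt5 in
/-- For a subgroup  of  with no non-abelian free subgroup, the set of
elements of  possessing a fixed point is a normal subgroup of . -/
theorem stmt5 (G : Subgroup (Equiv.Perm S1)) (hpos : ∀ g ∈ G, IsPosHomeo g)
    (hfree : ¬ HasFreeSubgroup G) :
    ∃ H : Subgroup G,
      ((H : Set G) = {g : G | ∃ x : S1, (g : Equiv.Perm S1) x = x}) ∧ H.Normal := by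
  refine ⟨{ carrier := {g : G | ∃ x : S1, (g : Equiv.Perm S1) x = x}
          , one_mem' := ⟨(((0:ℝ)) : S1), by simp⟩
          , mul_mem' := ?_
          , inv_mem' := ?_ }, rfl, ?_⟩
  · rintro p q ⟨x, hx⟩ ⟨y, hy⟩
    by_contra hno
    simp only [Set.mem_setOf_eq, not_exists] at hno
    refine hfree (free_of_no_common_fix G (f := (p : Equiv.Perm S1)) (g := (q : Equiv.Perm S1))
      p.2 q.2 (hpos _ p.2) (hpos _ q.2) ⟨x, hx⟩ ⟨y, hy⟩ ?_)
    rintro s ⟨hs1, hs2⟩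
    refine hno s ?_
    rw [Subgroup.coe_mul, Equiv.Perm.mul_apply, hs2, hs1]
  · rintro p ⟨x, hx⟩
    refine ⟨x, ?_⟩
    rw [InvMemClass.coe_inv]
    nth_rewrite 1 [← hx]
    exact Equiv.symm_apply_apply _ _
  · constructor
    rintro n ⟨x, hx⟩ g
    refine ⟨(g : Equiv.Perm S1) x, ?_⟩
    simp only [Subgroup.coe_mul, InvMemClass.coe_inv, Equiv.Perm.mul_apply,
      Equiv.Perm.inv_def, Equiv.symm_apply_apply, hx]
end
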